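/- (Vertex isoperimetric inequality on the hypercube, two-family version) Let X be a finite set and let 𝒜, ℬ ⊆ 2^X be nonempty set systems. Then there exist a Hamming ball 𝒜₀ with center X and a Hamming ball ℬ₀ with center ∅ such that |𝒜₀| = |𝒜|, |ℬ₀| = |ℬ|, and d(𝒜₀, ℬ₀) ≥ d(𝒜, ℬ). -/

import Mathlib

open Finset

/-- Hamming distance between two finsets: size of the symmetric difference. -/
def hdist {α : Type*} [DecidableEq α] (A B : Finset α) : ℕ :=
  ((A \ B) ∪ (B \ A)).card

/-- Hamming distance between two set systems: the minimum over pairs. -/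
noncomputable def famDist {α : Type*} [DecidableEq α] (𝒜 ℬ : Finset (Finset α)) : ℕ :=
  sInf {n | ∃ A ∈ 𝒜, ∃ B ∈ ℬ, hdist A B = n}

/-- The Hamming ball of center `A` and radius `r`. -/
def hamBall {α : Type*} [DecidableEq α] [Fintype α] (A : Finset α) (r : ℕ) :
    Finset (Finset α) :=
  Finset.univ.filter fun B => hdist A B ≤ r

/-- `𝒞` is *a* Hamming ball of center `c` (of some radius `r ≥ 1`):
`H_{r-1}(c) ⊆ 𝒞 ⊆ H_r(c)`. -/
def IsHamBall {α : Type*} [DecidableEq α] [Fintype α] (c : Finset α)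
    (𝒞 : Finset (Finset α)) : Prop :=
  ∃ r : ℕ, 1 ≤ r ∧ hamBall c (r - 1) ⊆ 𝒞 ∧ 𝒞 ⊆ hamBall c r

namespace Harper
set_option linter.unusedSectionVars false

variable {α : Type*} [LinearOrder α] [DecidableEq α]

/-- lex order: smaller iff it contains the least point of difference. -/
def lexlt (A B : Finset α) : Prop :=
  ∃ m, m ∈ A ∧ m ∉ B ∧ ∀ t, t < m → (t ∈ A ↔ t ∈ B)

/-- simplicial order: by size, then lex. -/
def slt (A B : Finset α) : Prop :=
  A.card < B.card ∨ (A.card = B.card ∧ lexlt A B)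

def sle (A B : Finset α) : Prop := slt A B ∨ A = B

theorem lexlt_asymm {A B : Finset α} (h1 : lexlt A B) (h2 : lexlt B A) : False := by
  obtain ⟨m1, hm1A, hm1B, h1'⟩ := h1
  obtain ⟨m2, hm2B, hm2A, h2'⟩ := h2
  rcases lt_trichotomy m1 m2 with h | h | h
  · exact hm1B ((h2' m1 h).2 hm1A)
  · exact hm2A (h ▸ hm1A)
  · exact hm2A ((h1' m2 h).2 hm2B)

theorem lexlt_irrefl (A : Finset α) : ¬ lexlt A A := fun h => lexlt_asymm h h

theorem lexlt_trans {A B C : Finset α} (h1 : lexlt A B) (h2 : lexlt B C) : lexlt A C := by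
  obtain ⟨m1, hm1A, hm1B, h1'⟩ := h1
  obtain ⟨m2, hm2B, hm2C, h2'⟩ := h2
  rcases lt_trichotomy m1 m2 with h | h | h
  · exact ⟨m1, hm1A, fun hc => hm1B ((h2' m1 h).2 hc),
      fun t ht => (h1' t ht).trans (h2' t (ht.trans h))⟩
  · exact absurd (h ▸ hm1B) (fun hh => hh hm2B)
  · exact ⟨m2, (h1' m2 h).2 hm2B, hm2C,
      fun t ht => (h1' t (ht.trans h)).trans (h2' t ht)⟩

theorem lexlt_total {A B : Finset α} (h : A ≠ B) : lexlt A B ∨ lexlt B A := by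
  have hD : ((A \ B) ∪ (B \ A)).Nonempty := by
    rw [Finset.nonempty_iff_ne_empty]
    intro hc
    rw [Finset.union_eq_empty, Finset.sdiff_eq_empty_iff_subset,
      Finset.sdiff_eq_empty_iff_subset] at hc
    exact h (Finset.Subset.antisymm hc.1 hc.2)
  set m := ((A \ B) ∪ (B \ A)).min' hD with hm
  have hmem : m ∈ (A \ B) ∪ (B \ A) := Finset.min'_mem _ hD
  have hagree : ∀ t, t < m → (t ∈ A ↔ t ∈ B) := by
    intro t ht
    by_contra hc
    have : t ∈ (A \ B) ∪ (B \ A) := by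
      simp only [Finset.mem_union, Finset.mem_sdiff]
      tauto
    exact absurd (Finset.min'_le _ _ this) (not_le.2 ht)
  rcases Finset.mem_union.1 hmem with h' | h'
  · exact Or.inl ⟨m, (Finset.mem_sdiff.1 h').1, (Finset.mem_sdiff.1 h').2, hagree⟩
  · exact Or.inr ⟨m, (Finset.mem_sdiff.1 h').1, (Finset.mem_sdiff.1 h').2,
      fun t ht => (hagree t ht).symm⟩

theorem slt_irrefl (A : Finset α) : ¬ slt A A := by
  intro h
  rcases h with h | ⟨_, h⟩
  · omega
  · exact lexlt_irrefl A h

theorem slt_trans {A B C : Finset α} (h1 : slt A B) (h2 : slt B C) : slt A C := by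
  rcases h1 with h1 | ⟨e1, h1⟩ <;> rcases h2 with h2 | ⟨e2, h2⟩
  · exact Or.inl (h1.trans h2)
  · exact Or.inl (e2 ▸ h1)
  · exact Or.inl (e1 ▸ h2)
  · exact Or.inr ⟨e1.trans e2, lexlt_trans h1 h2⟩

theorem slt_asymm {A B : Finset α} (h1 : slt A B) (h2 : slt B A) : False :=
  slt_irrefl A (slt_trans h1 h2)

theorem slt_ne {A B : Finset α} (h : slt A B) : A ≠ B := fun hc => slt_irrefl A (hc ▸ h)

theorem sle_refl (A : Finset α) : sle A A := Or.inr rfl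

theorem sle_trans {A B C : Finset α} (h1 : sle A B) (h2 : sle B C) : sle A C := by
  rcases h1 with h1 | rfl
  · rcases h2 with h2 | rfl
    · exact Or.inl (slt_trans h1 h2)
    · exact Or.inl h1
  · exact h2

theorem sle_antisymm {A B : Finset α} (h1 : sle A B) (h2 : sle B A) : A = B := by
  rcases h1 with h1 | rfl
  · rcases h2 with h2 | rfl
    · exact absurd (slt_trans h1 h2) (slt_irrefl A)
    · rfl
  · rfl

theorem sle_total (A B : Finset α) : sle A B ∨ sle B A := by
  by_cases h : A = B
  · exact Or.inl (Or.inr h)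
  rcases lt_trichotomy A.card B.card with hc | hc | hc
  · exact Or.inl (Or.inl (Or.inl hc))
  · rcases lexlt_total h with h' | h'
    · exact Or.inl (Or.inl (Or.inr ⟨hc, h'⟩))
    · exact Or.inr (Or.inl (Or.inr ⟨hc.symm, h'⟩))
  · exact Or.inr (Or.inl (Or.inl hc))

theorem slt_or_sle (A B : Finset α) : slt A B ∨ sle B A := by
  rcases sle_total A B with h | h
  · rcases h with h | rfl
    · exact Or.inl h
    · exact Or.inr (sle_refl A)
  · exact Or.inr h

theorem slt_of_sle_of_ne {A B : Finset α} (h : sle A B) (hne : A ≠ B) : slt A B := by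
  rcases h with h | rfl
  · exact h
  · exact absurd rfl hne

theorem sle_of_slt {A B : Finset α} (h : slt A B) : sle A B := Or.inl h

theorem slt_of_card_lt {A B : Finset α} (h : A.card < B.card) : slt A B := Or.inl h

theorem card_le_of_sle {A B : Finset α} (h : sle A B) : A.card ≤ B.card := by
  rcases h with h | rfl
  · rcases h with h | ⟨e, _⟩ <;> omega
  · exact le_refl _

theorem empty_sle (A : Finset α) : sle (∅ : Finset α) A := by
  rcases eq_or_ne A ∅ with rfl | h
  · exact sle_refl _
  · exact Or.inl (Or.inl (by
      have := Finset.card_pos.2 (Finset.nonempty_iff_ne_empty.2 h)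
      simpa using this))

theorem not_slt_of_sle {A B : Finset α} (h : sle A B) : ¬ slt B A := fun hc =>
  slt_irrefl B (slt_trans hc (slt_of_sle_of_ne h (slt_ne hc).symm))

theorem sle_of_not_slt {A B : Finset α} (h : ¬ slt A B) : sle B A := by
  rcases sle_total B A with h' | h'
  · exact h'
  · rcases h' with h' | rfl
    · exact absurd h' h
    · exact sle_refl A

instance : IsTrans (Finset α) sle := ⟨fun _ _ _ => sle_trans⟩
instance : IsAntisymm (Finset α) sle := ⟨fun _ _ => sle_antisymm⟩
instance : IsTotal (Finset α) sle := ⟨sle_total⟩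
noncomputable instance : DecidableRel (sle (α := α)) := fun _ _ => Classical.dec _


-- ## hdist lemmas

theorem hdist_comm (A B : Finset α) : hdist A B = hdist B A := by
  unfold hdist; rw [Finset.union_comm]

@[simp] theorem hdist_self (A : Finset α) : hdist A A = 0 := by
  simp [hdist]

theorem hdist_eq_zero_iff {A B : Finset α} : hdist A B = 0 ↔ A = B := by
  constructor
  · intro h
    have := Finset.card_eq_zero.1 h
    rw [Finset.union_eq_empty, Finset.sdiff_eq_empty_iff_subset,
      Finset.sdiff_eq_empty_iff_subset] at this
    exact Finset.Subset.antisymm this.1 this.2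
  · rintro rfl; simp

theorem hdist_triangle (A B C : Finset α) : hdist A C ≤ hdist A B + hdist B C := by
  have hsub : (A \ C) ∪ (C \ A) ⊆ ((A \ B) ∪ (B \ A)) ∪ ((B \ C) ∪ (C \ B)) := by
    intro x hx
    simp only [Finset.mem_union, Finset.mem_sdiff] at hx ⊢
    by_cases hB : x ∈ B <;> tauto
  calc hdist A C ≤ (((A \ B) ∪ (B \ A)) ∪ ((B \ C) ∪ (C \ B))).card :=
        Finset.card_le_card hsub
    _ ≤ hdist A B + hdist B C := Finset.card_union_le _ _

theorem hdist_erase_left {A B : Finset α} {i : α} (hiA : i ∈ A) (hiB : i ∉ B) :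
    hdist A B = hdist (A.erase i) B + 1 := by
  have h1 : (A \ B) ∪ (B \ A) = insert i ((A.erase i \ B) ∪ (B \ A.erase i)) := by
    ext x
    simp only [Finset.mem_union, Finset.mem_sdiff, Finset.mem_insert, Finset.mem_erase]
    by_cases hx : x = i
    · subst hx; tauto
    · tauto
  have h2 : i ∉ (A.erase i \ B) ∪ (B \ A.erase i) := by
    simp only [Finset.mem_union, Finset.mem_sdiff, Finset.mem_erase]
    tauto
  rw [hdist, h1, Finset.card_insert_of_notMem h2, hdist]

theorem hdist_insert_left {A B : Finset α} {i : α} (hiA : i ∉ A) (hiB : i ∈ B) :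
    hdist A B = hdist (insert i A) B + 1 := by
  have h1 : (A \ B) ∪ (B \ A) = insert i ((insert i A \ B) ∪ (B \ insert i A)) := by
    ext x
    simp only [Finset.mem_union, Finset.mem_sdiff, Finset.mem_insert]
    by_cases hx : x = i
    · subst hx; tauto
    · tauto
  have h2 : i ∉ (insert i A \ B) ∪ (B \ insert i A) := by
    simp only [Finset.mem_union, Finset.mem_sdiff, Finset.mem_insert]
    tauto
  rw [hdist, h1, Finset.card_insert_of_notMem h2, hdist]

theorem hdist_insert_insert {A B : Finset α} {i : α} (hA : i ∉ A) (hB : i ∉ B) :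
    hdist (insert i A) (insert i B) = hdist A B := by
  have : (insert i A \ insert i B) ∪ (insert i B \ insert i A) = (A \ B) ∪ (B \ A) := by
    ext x
    simp only [Finset.mem_union, Finset.mem_sdiff, Finset.mem_insert]
    by_cases hx : x = i
    · subst hx; tauto
    · tauto
  rw [hdist, this, hdist]

theorem hdist_erase_erase {A B : Finset α} {i : α} (hA : i ∈ A) (hB : i ∈ B) :
    hdist (A.erase i) (B.erase i) = hdist A B := by
  have : (A.erase i \ B.erase i) ∪ (B.erase i \ A.erase i) = (A \ B) ∪ (B \ A) := by
    ext x
    simp only [Finset.mem_union, Finset.mem_sdiff, Finset.mem_erase]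
    by_cases hx : x = i
    · subst hx; tauto
    · tauto
  rw [hdist, this, hdist]

theorem hdist_erase_self {w : Finset α} {j : α} (hj : j ∈ w) : hdist (w.erase j) w = 1 := by
  have := hdist_erase_left (A := w) (B := w.erase j) hj (Finset.notMem_erase j w)
  rw [hdist_comm]
  rw [this]
  simp

theorem hdist_insert_self {w : Finset α} {j : α} (hj : j ∉ w) : hdist (insert j w) w = 1 := by
  have := hdist_erase_left (A := insert j w) (B := w) (Finset.mem_insert_self j w) hj
  rw [this, Finset.erase_insert hj]
  simp

@[simp] theorem hdist_empty_left (B : Finset α) : hdist ∅ B = B.card := by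
  simp [hdist]

theorem hdist_le_one_iff {u w : Finset α} :
    hdist u w ≤ 1 ↔ u = w ∨ (∃ j ∈ w, u = w.erase j) ∨ (∃ j, j ∉ w ∧ u = insert j w) := by
  constructor
  · intro h
    interval_cases hv : hdist u w
    · exact Or.inl (hdist_eq_zero_iff.1 hv)
    · obtain ⟨j, hj⟩ := Finset.card_eq_one.1 hv
      have hmem : ∀ x, (x ∈ (u \ w) ∪ (w \ u)) ↔ x = j := by
        intro x; rw [hj]; simp
      have hj' := (hmem j).2 rfl
      simp only [Finset.mem_union, Finset.mem_sdiff] at hj'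
      rcases hj' with ⟨hju, hjw⟩ | ⟨hjw, hju⟩
      · refine Or.inr (Or.inr ⟨j, hjw, ?_⟩)
        ext x
        simp only [Finset.mem_insert]
        constructor
        · intro hx
          by_cases hxj : x = j
          · exact Or.inl hxj
          · refine Or.inr (by_contra fun hc => ?_)
            have := (hmem x).1 (by simp only [Finset.mem_union, Finset.mem_sdiff]; tauto)
            exact hxj this
        · rintro (rfl | hx)
          · exact hju
          · by_contra hc
            have := (hmem x).1 (by simp only [Finset.mem_union, Finset.mem_sdiff]; tauto)
            subst this; exact hjw hx
      · refine Or.inr (Or.inl ⟨j, hjw, ?_⟩)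
        ext x
        simp only [Finset.mem_erase]
        constructor
        · intro hx
          refine ⟨fun hc => hju (hc ▸ hx), by_contra fun hc => ?_⟩
          have := (hmem x).1 (by simp only [Finset.mem_union, Finset.mem_sdiff]; tauto)
          subst this; exact hju hx
        · rintro ⟨hxj, hx⟩
          by_contra hc
          have := (hmem x).1 (by simp only [Finset.mem_union, Finset.mem_sdiff]; tauto)
          exact hxj this
  · rintro (rfl | ⟨j, hj, rfl⟩ | ⟨j, hj, rfl⟩)
    · simp
    · exact le_of_eq (hdist_erase_self hj)
    · exact le_of_eq (hdist_insert_self hj)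

theorem hdist_le_card {s A B : Finset α} (hA : A ⊆ s) (hB : B ⊆ s) : hdist A B ≤ s.card :=
  Finset.card_le_card (by
    intro x hx
    simp only [Finset.mem_union, Finset.mem_sdiff] at hx
    rcases hx with ⟨h, _⟩ | ⟨h, _⟩
    exacts [hA h, hB h])

theorem hdist_univ_left [Fintype α] (A : Finset α) :
    hdist Finset.univ A = Fintype.card α - A.card := by
  have h0 : A \ Finset.univ = ∅ := by simp [Finset.sdiff_eq_empty_iff_subset]
  rw [hdist, h0, Finset.union_empty, Finset.card_sdiff_of_subset (Finset.subset_univ A),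
    Finset.card_univ]

theorem hdist_step {A B : Finset α} {t : ℕ} (h : hdist A B = t + 1) :
    ∃ C : Finset α, C ⊆ A ∪ B ∧ hdist C A ≤ 1 ∧ hdist C B = t := by
  have hne : ((A \ B) ∪ (B \ A)).Nonempty := by
    rw [← Finset.card_pos, ← hdist]; omega
  obtain ⟨j, hj⟩ := hne
  simp only [Finset.mem_union, Finset.mem_sdiff] at hj
  rcases hj with ⟨hjA, hjB⟩ | ⟨hjB, hjA⟩
  · refine ⟨A.erase j, (Finset.erase_subset _ _).trans Finset.subset_union_left, ?_, ?_⟩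
    · exact le_of_eq (hdist_erase_self hjA)
    · have := hdist_erase_left hjA hjB; omega
  · refine ⟨insert j A, ?_, le_of_eq (hdist_insert_self hjA), ?_⟩
    · exact Finset.insert_subset (Finset.mem_union_right _ hjB) Finset.subset_union_left
    · have := hdist_insert_left hjA hjB; omega


-- ## predecessor map: erase the max

noncomputable def pdel (w : Finset α) : Finset α :=
  if h : w.Nonempty then w.erase (w.max' h) else ∅

@[simp] theorem pdel_empty : pdel (∅ : Finset α) = ∅ := by simp [pdel]

theorem pdel_of_nonempty {w : Finset α} (h : w.Nonempty) : pdel w = w.erase (w.max' h) := by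
  simp [pdel, h]

theorem pdel_subset (w : Finset α) : pdel w ⊆ w := by
  by_cases h : w.Nonempty
  · rw [pdel_of_nonempty h]; exact Finset.erase_subset _ _
  · rw [Finset.not_nonempty_iff_eq_empty] at h; subst h; simp

theorem pdel_card {w : Finset α} (h : w.Nonempty) : (pdel w).card = w.card - 1 := by
  rw [pdel_of_nonempty h, Finset.card_erase_of_mem (Finset.max'_mem w h)]

theorem hdist_pdel_le (w : Finset α) : hdist (pdel w) w ≤ 1 := by
  by_cases h : w.Nonempty
  · rw [pdel_of_nonempty h]
    exact le_of_eq (hdist_erase_self (Finset.max'_mem w h))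
  · rw [Finset.not_nonempty_iff_eq_empty] at h; subst h; simp

theorem sle_pdel_self (w : Finset α) : sle (pdel w) w := by
  by_cases h : w.Nonempty
  · refine Or.inl (Or.inl ?_)
    rw [pdel_card h]
    have := Finset.card_pos.2 h
    omega
  · rw [Finset.not_nonempty_iff_eq_empty] at h; subst h; simp [sle_refl]

/-- removing the max is lex-least among removals -/
theorem pdel_sle_erase {w : Finset α} {j : α} (hj : j ∈ w) : sle (pdel w) (w.erase j) := by
  have hne : w.Nonempty := ⟨j, hj⟩
  rw [pdel_of_nonempty hne]
  set M := w.max' hne with hM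
  by_cases hjM : j = M
  · subst hjM; exact sle_refl _
  · refine Or.inl (Or.inr ⟨?_, ?_⟩)
    · rw [Finset.card_erase_of_mem (Finset.max'_mem w hne), Finset.card_erase_of_mem hj]
    · refine ⟨j, Finset.mem_erase.2 ⟨fun hc => hjM hc, hj⟩, Finset.notMem_erase j w, ?_⟩
      intro t ht
      simp only [Finset.mem_erase]
      have htM : t ≠ M := by
        intro hc; subst hc
        exact absurd (Finset.le_max' w j hj) (not_le.2 (lt_of_lt_of_le ht (le_of_eq rfl)))
      have htj : t ≠ j := fun hc => absurd ht (by rw [hc]; exact lt_irrefl j)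
      tauto

/-- pdel w is the sle-least set within hamming distance 1 of w. -/
theorem pdel_sle_of_hdist_le_one {u w : Finset α} (h : hdist u w ≤ 1) : sle (pdel w) u := by
  rcases hdist_le_one_iff.1 h with rfl | ⟨j, hj, rfl⟩ | ⟨j, hj, rfl⟩
  · exact sle_pdel_self u
  · exact pdel_sle_erase hj
  · refine sle_trans (sle_pdel_self w) (Or.inl (Or.inl ?_))
    rw [Finset.card_insert_of_notMem hj]; omega

/-- Monotonicity of pdel w.r.t. the simplicial order. -/
theorem pdel_mono {z w : Finset α} (h : sle z w) : sle (pdel z) (pdel w) := by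
  rcases h with h | rfl
  swap
  · exact sle_refl _
  rcases h with hcard | ⟨hcard, hlex⟩
  · -- cards differ
    by_cases hz : z.Nonempty
    · have hw : w.Nonempty := Finset.card_pos.1 (by have := Finset.card_pos.2 hz; omega)
      refine Or.inl (Or.inl ?_)
      rw [pdel_card hz, pdel_card hw]
      have := Finset.card_pos.2 hz
      omega
    · rw [Finset.not_nonempty_iff_eq_empty] at hz; subst hz
      simp only [pdel_empty]
      exact empty_sle _
  · -- cards equal, lex
    obtain ⟨m, hmz, hmw, hag⟩ := hlex
    have hzne : z.Nonempty := ⟨m, hmz⟩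
    have hwne : w.Nonempty := Finset.card_pos.1 (by have := Finset.card_pos.2 hzne; omega)
    set Mz := z.max' hzne with hMz
    set Mw := w.max' hwne with hMw
    -- m ≤ Mw : otherwise all elements of w are < m hence w ⊆ z and w = z
    have hmMw : m ≤ Mw := by
      by_contra hc
      push_neg at hc
      have hwz : w ⊆ z := fun t htw =>
        (hag t (lt_of_le_of_lt (Finset.le_max' w t htw) hc)).2 htw
      have : w = z := Finset.eq_of_subset_of_card_le hwz (le_of_eq hcard)
      exact hmw (this ▸ hmz)
    by_cases hmMz : m = Mz
    · -- z \ w = {m}, w = (z erase m) ∪ {u}; pdels equal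
      have hzw : z \ w = {m} := by
        ext t
        simp only [Finset.mem_sdiff, Finset.mem_singleton]
        constructor
        · rintro ⟨htz, htw⟩
          by_contra hc
          have htm : t < m := lt_of_le_of_ne (hmMz ▸ Finset.le_max' z t htz) hc
          exact htw ((hag t htm).1 htz)
        · rintro rfl; exact ⟨hmz, hmw⟩
      have hcard_zw : (z \ w).card = 1 := by rw [hzw]; simp
      have hcard_wz : (w \ z).card = 1 := by
        have h1 : (z \ w).card + (z ∩ w).card = z.card := by
          rw [Finset.card_sdiff_add_card_inter]
        have h2 : (w \ z).card + (w ∩ z).card = w.card := by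
          rw [Finset.card_sdiff_add_card_inter]
        rw [Finset.inter_comm] at h2
        omega
      obtain ⟨u, hu⟩ := Finset.card_eq_one.1 hcard_wz
      have huw : u ∈ w := (Finset.mem_sdiff.1 (hu ▸ Finset.mem_singleton_self u)).1
      have huz : u ∉ z := (Finset.mem_sdiff.1 (hu ▸ Finset.mem_singleton_self u)).2
      have hum : m < u := by
        rcases lt_trichotomy u m with h' | rfl | h'
        · exact absurd ((hag u h').2 huw) huz
        · exact absurd huw hmw
        · exact h'
      -- Mw = u, and w.erase u = z.erase m
      have hwdecomp : ∀ t, t ∈ w ↔ (t ∈ z ∧ t ≠ m) ∨ t = u := by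
        intro t
        constructor
        · intro htw
          by_cases htz : t ∈ z
          · refine Or.inl ⟨htz, fun hc => hmw (hc ▸ htw)⟩
          · have : t ∈ w \ z := Finset.mem_sdiff.2 ⟨htw, htz⟩
            exact Or.inr (Finset.mem_singleton.1 (hu ▸ this))
        · rintro (⟨htz, htm⟩ | rfl)
          · by_contra hc
            have : t ∈ z \ w := Finset.mem_sdiff.2 ⟨htz, hc⟩
            exact htm (Finset.mem_singleton.1 (hzw ▸ this))
          · exact huw
      have hMwu : Mw = u := by
        have h1 : Mw ∈ w := Finset.max'_mem w hwne
        rcases (hwdecomp Mw).1 h1 with ⟨hMz', hMm⟩ | h'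
        · exfalso
          have h2 : Mw ≤ Mz := Finset.le_max' z Mw hMz'
          have h3 : Mw < m := lt_of_le_of_ne (hmMz ▸ h2) hMm
          have h4 : u ≤ Mw := Finset.le_max' w u huw
          have : u < u := lt_of_le_of_lt h4 (h3.trans hum)
          exact absurd this (lt_irrefl u)
        · exact h'
      -- conclude pdel z = pdel w
      refine Or.inr ?_
      rw [pdel_of_nonempty hzne, pdel_of_nonempty hwne, ← hMz, ← hMw, hMwu, ← hmMz]
      ext t
      simp only [Finset.mem_erase]
      constructor
      · rintro ⟨htm, htz⟩
        refine ⟨?_, (hwdecomp t).2 (Or.inl ⟨htz, htm⟩)⟩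
        intro hc; subst hc; exact huz htz
      · rintro ⟨htu, htw⟩
        rcases (hwdecomp t).1 htw with ⟨htz, htm⟩ | rfl
        · exact ⟨htm, htz⟩
        · exact absurd rfl htu
    · -- m ≠ Mz: witness m survives in both pdels
      have hmMz' : m < Mz := lt_of_le_of_ne (Finset.le_max' z m hmz) hmMz
      refine Or.inl (Or.inr ⟨?_, m, ?_, ?_, ?_⟩)
      · rw [pdel_card hzne, pdel_card hwne, hcard]
      · rw [pdel_of_nonempty hzne]
        exact Finset.mem_erase.2 ⟨hmMz, hmz⟩
      · intro hc
        exact hmw (pdel_subset w hc)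
      · intro t ht
        rw [pdel_of_nonempty hzne, pdel_of_nonempty hwne]
        simp only [Finset.mem_erase]
        have htMz : t ≠ Mz := fun hc => absurd (hc ▸ (ht.trans hmMz')) (lt_irrefl _)
        have htMw : t ≠ Mw := fun hc => absurd (hc ▸ lt_of_lt_of_le ht hmMw) (lt_irrefl _)
        rw [← hMz, ← hMw]
        constructor
        · rintro ⟨_, htz⟩; exact ⟨htMw, (hag t ht).1 htz⟩
        · rintro ⟨_, htw⟩; exact ⟨htMz, (hag t ht).2 htw⟩


-- ## initial segments, downclosed families, neighbourhoods

/-- `𝒞` is a downclosed family of subsets of `s` (w.r.t. the simplicial order). -/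
def DC (s : Finset α) (𝒞 : Finset (Finset α)) : Prop :=
  𝒞 ⊆ s.powerset ∧ ∀ z w, z ∈ s.powerset → w ∈ 𝒞 → sle z w → z ∈ 𝒞

open Classical in
/-- all subsets of `s` within hamming distance 1 of the family `𝒜`. -/
noncomputable def nbr (s : Finset α) (𝒜 : Finset (Finset α)) : Finset (Finset α) :=
  s.powerset.filter (fun w => ∃ A ∈ 𝒜, hdist A w ≤ 1)

/-- the first `m` subsets of `s` in the simplicial order. -/
noncomputable def seg (s : Finset α) (m : ℕ) : Finset (Finset α) :=
  ((s.powerset.sort sle).take m).toFinset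

open Classical in
theorem mem_nbr {s : Finset α} {𝒜 : Finset (Finset α)} {w : Finset α} :
    w ∈ nbr s 𝒜 ↔ w ∈ s.powerset ∧ ∃ A ∈ 𝒜, hdist A w ≤ 1 := by
  simp [nbr]

theorem nbr_subset_powerset (s : Finset α) (𝒜 : Finset (Finset α)) :
    nbr s 𝒜 ⊆ s.powerset := Finset.filter_subset _ _

theorem subset_nbr {s : Finset α} {𝒜 : Finset (Finset α)} (h : 𝒜 ⊆ s.powerset) :
    𝒜 ⊆ nbr s 𝒜 := fun A hA => mem_nbr.2 ⟨h hA, A, hA, by simp⟩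

theorem nbr_mono {s : Finset α} {𝒜 ℬ : Finset (Finset α)} (h : 𝒜 ⊆ ℬ) :
    nbr s 𝒜 ⊆ nbr s ℬ := by
  intro w hw
  rcases mem_nbr.1 hw with ⟨hws, A, hA, hd⟩
  exact mem_nbr.2 ⟨hws, A, h hA, hd⟩

theorem seg_subset_powerset (s : Finset α) (m : ℕ) : seg s m ⊆ s.powerset := by
  intro A hA
  rw [seg, List.mem_toFinset] at hA
  exact (Finset.mem_sort (α := Finset α) sle).1 (List.take_subset m _ hA)

theorem card_seg {s : Finset α} {m : ℕ} (h : m ≤ 2 ^ s.card) : (seg s m).card = m := by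
  rw [seg, List.toFinset_card_of_nodup ((List.take_sublist m _).nodup (Finset.sort_nodup _ _)),
    List.length_take, Finset.length_sort, Finset.card_powerset]
  omega

theorem seg_mono {s : Finset α} {m m' : ℕ} (h : m ≤ m') : seg s m ⊆ seg s m' := by
  intro A hA
  rw [seg, List.mem_toFinset] at hA ⊢
  have : (s.powerset.sort sle).take m = ((s.powerset.sort sle).take m').take m := by
    rw [List.take_take, min_eq_left h]
  rw [this] at hA
  exact List.take_subset m _ hA

theorem take_downclosed : ∀ (l : List (Finset α)), l.Pairwise sle →
    ∀ (m : ℕ) (z w : Finset α), w ∈ l.take m → z ∈ l → sle z w → z ∈ l.take m := by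
  intro l
  induction l with
  | nil => intro _ m z w hw; simp at hw
  | cons a tl ih =>
    intro hsort m z w hw hz hzw
    rcases List.pairwise_cons.1 hsort with ⟨ha, htl⟩
    cases m with
    | zero => simp at hw
    | succ m =>
      rw [List.take_succ_cons] at hw ⊢
      rcases List.mem_cons.1 hz with rfl | hz'
      · exact List.mem_cons_self
      · rcases List.mem_cons.1 hw with rfl | hw'
        · have : z = w := sle_antisymm hzw (ha z hz')
          subst this
          exact List.mem_cons_self
        · exact List.mem_cons.2 (Or.inr (ih htl m z w hw' hz' hzw))

theorem DC_seg (s : Finset α) (m : ℕ) : DC s (seg s m) := by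
  refine ⟨seg_subset_powerset s m, ?_⟩
  intro z w hz hw hzw
  rw [seg, List.mem_toFinset] at hw ⊢
  exact take_downclosed _ (Finset.pairwise_sort _ _) m z w hw
    ((Finset.mem_sort (α := Finset α) sle).2 hz) hzw

theorem DC_comparable {s : Finset α} {𝒞 𝒟 : Finset (Finset α)} (h1 : DC s 𝒞) (h2 : DC s 𝒟) :
    𝒞 ⊆ 𝒟 ∨ 𝒟 ⊆ 𝒞 := by
  by_contra hc
  push_neg at hc
  obtain ⟨⟨c, hc1, hc2⟩, d, hd1, hd2⟩ :=
    And.intro (Finset.not_subset.1 hc.1) (Finset.not_subset.1 hc.2)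
  rcases sle_total c d with h | h
  · exact hc2 (h2.2 c d (h1.1 hc1) hd1 h)
  · exact hd2 (h1.2 d c (h2.1 hd1) hc1 h)

theorem DC_unique {s : Finset α} {𝒞 𝒟 : Finset (Finset α)} (h1 : DC s 𝒞) (h2 : DC s 𝒟)
    (hcard : 𝒞.card = 𝒟.card) : 𝒞 = 𝒟 := by
  rcases DC_comparable h1 h2 with h | h
  · exact Finset.eq_of_subset_of_card_le h (le_of_eq hcard.symm)
  · exact (Finset.eq_of_subset_of_card_le h (le_of_eq hcard)).symm

theorem seg_card_eq {s : Finset α} {𝒞 : Finset (Finset α)} (h : DC s 𝒞) :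
    seg s 𝒞.card = 𝒞 := by
  refine DC_unique (DC_seg s _) h (card_seg ?_)
  calc 𝒞.card ≤ s.powerset.card := Finset.card_le_card h.1
    _ = 2 ^ s.card := Finset.card_powerset s

theorem mem_nbr_DC {s : Finset α} {𝒞 : Finset (Finset α)} (h : DC s 𝒞) {w : Finset α} :
    w ∈ nbr s 𝒞 ↔ w ∈ s.powerset ∧ pdel w ∈ 𝒞 := by
  rw [mem_nbr]
  constructor
  · rintro ⟨hws, A, hA, hd⟩
    refine ⟨hws, h.2 _ A ?_ hA (pdel_sle_of_hdist_le_one hd)⟩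
    exact Finset.mem_powerset.2 ((pdel_subset w).trans (Finset.mem_powerset.1 hws))
  · rintro ⟨hws, hp⟩
    exact ⟨hws, pdel w, hp, hdist_pdel_le w⟩

theorem DC_nbr {s : Finset α} {𝒞 : Finset (Finset α)} (h : DC s 𝒞) : DC s (nbr s 𝒞) := by
  refine ⟨nbr_subset_powerset s 𝒞, ?_⟩
  intro z w hz hw hzw
  rcases (mem_nbr_DC h).1 hw with ⟨hws, hp⟩
  refine (mem_nbr_DC h).2 ⟨hz, ?_⟩
  refine h.2 _ _ ?_ hp (pdel_mono hzw)
  exact Finset.mem_powerset.2 ((pdel_subset z).trans (Finset.mem_powerset.1 hz))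

open Classical in
/-- the initial segment determined by an element. -/
noncomputable def iseg (s : Finset α) (y : Finset α) : Finset (Finset α) :=
  s.powerset.filter (fun z => sle z y)

open Classical in
theorem mem_iseg {s y z : Finset α} : z ∈ iseg s y ↔ z ∈ s.powerset ∧ sle z y := by
  simp [iseg]

theorem DC_iseg (s y : Finset α) : DC s (iseg s y) := by
  refine ⟨Finset.filter_subset _ _, ?_⟩
  intro z w hz hw hzw
  rcases mem_iseg.1 hw with ⟨_, hwy⟩
  exact mem_iseg.2 ⟨hz, sle_trans hzw hwy⟩

open Classical in
noncomputable def rank (s : Finset α) (A : Finset α) : ℕ := (iseg s A).card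

theorem rank_strict_mono {s z w : Finset α} (hz : z ∈ s.powerset) (hw : w ∈ s.powerset)
    (h : slt z w) : rank s z < rank s w := by
  refine Finset.card_lt_card ?_
  rw [Finset.ssubset_iff_of_subset]
  · exact ⟨w, mem_iseg.2 ⟨hw, sle_refl w⟩, fun hc => not_slt_of_sle (mem_iseg.1 hc).2 h⟩
  · intro t ht
    rcases mem_iseg.1 ht with ⟨hts, htz⟩
    exact mem_iseg.2 ⟨hts, sle_trans htz (sle_of_slt h)⟩

theorem rank_mono {s z w : Finset α} (hz : z ∈ s.powerset) (hw : w ∈ s.powerset)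
    (h : sle z w) : rank s z ≤ rank s w := by
  rcases h with h | rfl
  · exact le_of_lt (rank_strict_mono hz hw h)
  · exact le_refl _


-- ## sums over initial segments are minimal

theorem exists_sle_max {S : Finset (Finset α)} {s : Finset α} (hS : S ⊆ s.powerset)
    (hne : S.Nonempty) : ∃ w ∈ S, ∀ z ∈ S, sle z w := by
  obtain ⟨w, hwS, hw⟩ := Finset.exists_max_image S (rank s) hne
  refine ⟨w, hwS, fun z hz => ?_⟩
  rcases sle_total z w with h | h
  · exact h
  · rcases h with h | rfl
    · exact absurd (rank_strict_mono (hS hwS) (hS hz) h) (not_lt.2 (hw z hz))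
    · exact sle_refl _

theorem f_mono_of_strict {s : Finset α} {f : Finset α → ℕ}
    (hf : ∀ z w, z ∈ s.powerset → w ∈ s.powerset → slt z w → f z < f w)
    {z w : Finset α} (hz : z ∈ s.powerset) (hw : w ∈ s.powerset) (h : sle z w) :
    f z ≤ f w := by
  rcases h with h | rfl
  · exact le_of_lt (hf z w hz hw h)
  · exact le_refl _

theorem sum_seg_le {s : Finset α} {f : Finset α → ℕ}
    (hf : ∀ z w, z ∈ s.powerset → w ∈ s.powerset → slt z w → f z < f w) :
    ∀ (m : ℕ) (S : Finset (Finset α)), S ⊆ s.powerset → S.card = m →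
      ((∑ A ∈ seg s m, f A) ≤ ∑ A ∈ S, f A ∧
        (S ≠ seg s m → (∑ A ∈ seg s m, f A) < ∑ A ∈ S, f A)) := by
  intro m
  induction m with
  | zero =>
    intro S hS hcard
    have hS0 : S = ∅ := Finset.card_eq_zero.1 hcard
    have hseg : seg s 0 = ∅ := by simp [seg]
    rw [hS0, hseg]
    exact ⟨le_refl _, fun hc => absurd rfl hc⟩
  | succ m ih =>
    intro S hS hcard
    have hm1 : m + 1 ≤ 2 ^ s.card := by
      calc m + 1 = S.card := hcard.symm
        _ ≤ s.powerset.card := Finset.card_le_card hS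
        _ = 2 ^ s.card := Finset.card_powerset s
    have hSne : S.Nonempty := Finset.card_pos.1 (by omega)
    set T := seg s (m + 1) with hT
    have hTcard : T.card = m + 1 := card_seg hm1
    have hTp : T ⊆ s.powerset := seg_subset_powerset s _
    have hTne : T.Nonempty := Finset.card_pos.1 (by omega)
    obtain ⟨wS, hwS, hwSmax⟩ := exists_sle_max hS hSne
    obtain ⟨wT, hwT, hwTmax⟩ := exists_sle_max hTp hTne
    -- T.erase wT = seg s m
    have herase : T.erase wT = seg s m := by
      have hdc : DC s (T.erase wT) := by
        refine ⟨(Finset.erase_subset _ _).trans hTp, ?_⟩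
        intro z w hz hw hzw
        have hwT' : w ∈ T := Finset.mem_of_mem_erase hw
        have hz' : z ∈ T := (DC_seg s (m+1)).2 z w hz hwT' hzw
        refine Finset.mem_erase.2 ⟨?_, hz'⟩
        rintro rfl
        exact (Finset.mem_erase.1 hw).1 (sle_antisymm (hwTmax w hwT') hzw)
      have : (T.erase wT).card = m := by
        rw [Finset.card_erase_of_mem hwT, hTcard]; omega
      rw [← this, seg_card_eq hdc]
    -- wT ≼ wS
    have hwTS : sle wT wS := by
      by_contra hc
      have hlt : slt wS wT := by
        rcases slt_or_sle wS wT with h | h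
        · exact h
        · exact absurd h hc
      have hsub : S ⊆ T.erase wT := by
        intro z hz
        have h1 : sle z wS := hwSmax z hz
        have h2 : slt z wT := by
          rcases h1 with h1 | rfl
          · exact slt_trans h1 hlt
          · exact hlt
        refine Finset.mem_erase.2 ⟨slt_ne h2, ?_⟩
        exact (DC_seg s (m+1)).2 z wT (hS hz) hwT (sle_of_slt h2)
      have := Finset.card_le_card hsub
      rw [hcard, Finset.card_erase_of_mem hwT, hTcard] at this
      omega
    have hsumT : ∑ A ∈ T, f A = f wT + ∑ A ∈ seg s m, f A := by
      rw [← herase, Finset.add_sum_erase _ _ hwT]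
    have hsumS : ∑ A ∈ S, f A = f wS + ∑ A ∈ S.erase wS, f A := by
      rw [Finset.add_sum_erase _ _ hwS]
    have hIH := ih (S.erase wS) ((Finset.erase_subset _ _).trans hS)
      (by rw [Finset.card_erase_of_mem hwS, hcard]; omega)
    have hfTS : f wT ≤ f wS := f_mono_of_strict hf (hTp hwT) (hS hwS) hwTS
    constructor
    · rw [hsumT, hsumS]
      exact Nat.add_le_add hfTS hIH.1
    · intro hne
      rw [hsumT, hsumS]
      by_cases hww : wS = wT
      · have hne' : S.erase wS ≠ seg s m := by
          intro hc
          apply hne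
          have h1 : S = insert wS (S.erase wS) := (Finset.insert_erase hwS).symm
          have h2 : T = insert wT (T.erase wT) := (Finset.insert_erase hwT).symm
          rw [h1, hc, hww, ← herase, ← h2]
        exact Nat.add_lt_add_of_le_of_lt (hww ▸ hfTS) (hIH.2 hne')
      · have : slt wT wS := slt_of_sle_of_ne hwTS (fun hc => hww hc.symm)
        exact Nat.add_lt_add_of_lt_of_le (hf _ _ (hTp hwT) (hS hwS) this) hIH.1


-- ## sections and gluing

/-- the bottom section: members of `𝒜` avoiding `i` (as subsets of `s'`). -/
def sec0 (s' : Finset α) (𝒜 : Finset (Finset α)) : Finset (Finset α) :=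
  s'.powerset.filter (fun C => C ∈ 𝒜)

/-- the top section: sets whose extension by `i` belongs to `𝒜`. -/
def sec1 (i : α) (s' : Finset α) (𝒜 : Finset (Finset α)) : Finset (Finset α) :=
  s'.powerset.filter (fun C => insert i C ∈ 𝒜)

def glue (i : α) (C0 C1 : Finset (Finset α)) : Finset (Finset α) :=
  C0 ∪ C1.image (insert i)

theorem mem_sec0 {s' : Finset α} {𝒜 : Finset (Finset α)} {C : Finset α} :
    C ∈ sec0 s' 𝒜 ↔ C ⊆ s' ∧ C ∈ 𝒜 := by simp [sec0]

theorem mem_sec1 {i : α} {s' : Finset α} {𝒜 : Finset (Finset α)} {C : Finset α} :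
    C ∈ sec1 i s' 𝒜 ↔ C ⊆ s' ∧ insert i C ∈ 𝒜 := by simp [sec1]

theorem sec0_subset (s' : Finset α) (𝒜 : Finset (Finset α)) : sec0 s' 𝒜 ⊆ s'.powerset :=
  Finset.filter_subset _ _

theorem sec1_subset (i : α) (s' : Finset α) (𝒜 : Finset (Finset α)) :
    sec1 i s' 𝒜 ⊆ s'.powerset := Finset.filter_subset _ _

theorem card_sec_split {s : Finset α} {i : α} (hi : i ∈ s) {𝒜 : Finset (Finset α)}
    (h𝒜 : 𝒜 ⊆ s.powerset) :
    (sec0 (s.erase i) 𝒜).card + (sec1 i (s.erase i) 𝒜).card = 𝒜.card := by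
  classical
  have h0 : sec0 (s.erase i) 𝒜 = 𝒜.filter (fun A => i ∉ A) := by
    ext C
    rw [mem_sec0, Finset.mem_filter, Finset.subset_erase]
    constructor
    · rintro ⟨⟨_, hiC⟩, hC⟩; exact ⟨hC, hiC⟩
    · rintro ⟨hC, hiC⟩; exact ⟨⟨Finset.mem_powerset.1 (h𝒜 hC), hiC⟩, hC⟩
  have h1 : (sec1 i (s.erase i) 𝒜).card = (𝒜.filter (fun A => i ∈ A)).card := by
    refine Finset.card_bij' (fun C _ => insert i C) (fun A _ => A.erase i) ?_ ?_ ?_ ?_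
    · intro C hC
      rcases mem_sec1.1 hC with ⟨hCs, hC𝒜⟩
      exact Finset.mem_filter.2 ⟨hC𝒜, Finset.mem_insert_self i C⟩
    · intro A hA
      rcases Finset.mem_filter.1 hA with ⟨hA𝒜, hiA⟩
      refine mem_sec1.2 ⟨?_, by rw [Finset.insert_erase hiA]; exact hA𝒜⟩
      rw [Finset.subset_erase]
      exact ⟨(Finset.erase_subset _ _).trans (Finset.mem_powerset.1 (h𝒜 hA𝒜)),
        Finset.notMem_erase i A⟩
    · intro C hC
      rcases mem_sec1.1 hC with ⟨hCs, _⟩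
      have : i ∉ C := fun hc => (Finset.subset_erase.1 hCs).2 hc
      exact Finset.erase_insert this
    · intro A hA
      rcases Finset.mem_filter.1 hA with ⟨_, hiA⟩
      exact Finset.insert_erase hiA
  rw [h0, h1]
  have := Finset.card_filter_add_card_filter_not (s := 𝒜) (p := fun A => i ∈ A)
  omega

theorem glue_subset {s : Finset α} {i : α} (hi : i ∈ s) {C0 C1 : Finset (Finset α)}
    (h0 : C0 ⊆ (s.erase i).powerset) (h1 : C1 ⊆ (s.erase i).powerset) :
    glue i C0 C1 ⊆ s.powerset := by
  intro A hA
  rcases Finset.mem_union.1 hA with h | h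
  · exact Finset.mem_powerset.2 ((Finset.mem_powerset.1 (h0 h)).trans (Finset.erase_subset _ _))
  · obtain ⟨C, hC, rfl⟩ := Finset.mem_image.1 h
    refine Finset.mem_powerset.2 (Finset.insert_subset hi ?_)
    exact (Finset.mem_powerset.1 (h1 hC)).trans (Finset.erase_subset _ _)

theorem mem_glue {i : α} {C0 C1 : Finset (Finset α)} {A : Finset α}
    (h0 : C0 ⊆ ((s' : Finset α)).powerset) (h1 : C1 ⊆ s'.powerset) (hi : i ∉ s') :
    A ∈ glue i C0 C1 ↔ (i ∉ A ∧ A ∈ C0) ∨ (i ∈ A ∧ A.erase i ∈ C1) := by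
  constructor
  · intro h
    rcases Finset.mem_union.1 h with h | h
    · refine Or.inl ⟨fun hc => hi (Finset.mem_powerset.1 (h0 h) hc), h⟩
    · obtain ⟨C, hC, rfl⟩ := Finset.mem_image.1 h
      have hiC : i ∉ C := fun hc => hi (Finset.mem_powerset.1 (h1 hC) hc)
      exact Or.inr ⟨Finset.mem_insert_self i C, by rw [Finset.erase_insert hiC]; exact hC⟩
  · rintro (⟨_, h⟩ | ⟨hiA, h⟩)
    · exact Finset.mem_union_left _ h
    · refine Finset.mem_union_right _ (Finset.mem_image.2 ⟨A.erase i, h, ?_⟩)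
      rw [Finset.insert_erase hiA]

theorem card_glue {s' : Finset α} {i : α} (hi : i ∉ s') {C0 C1 : Finset (Finset α)}
    (h0 : C0 ⊆ s'.powerset) (h1 : C1 ⊆ s'.powerset) :
    (glue i C0 C1).card = C0.card + C1.card := by
  rw [glue, Finset.card_union_of_disjoint, Finset.card_image_of_injOn]
  · intro C hC D hD hCD
    have hiC : i ∉ C := fun hc => hi (Finset.mem_powerset.1 (h1 hC) hc)
    have hiD : i ∉ D := fun hc => hi (Finset.mem_powerset.1 (h1 hD) hc)
    rw [← Finset.erase_insert hiC, ← Finset.erase_insert hiD, hCD]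
  · rw [Finset.disjoint_left]
    intro A hA hA'
    obtain ⟨C, hC, rfl⟩ := Finset.mem_image.1 hA'
    exact hi (Finset.mem_powerset.1 (h0 hA) (Finset.mem_insert_self i C))

theorem sec0_glue {s' : Finset α} {i : α} (hi : i ∉ s') {C0 C1 : Finset (Finset α)}
    (h0 : C0 ⊆ s'.powerset) (h1 : C1 ⊆ s'.powerset) :
    sec0 s' (glue i C0 C1) = C0 := by
  ext C
  rw [mem_sec0, mem_glue h0 h1 hi]
  constructor
  · rintro ⟨hCs, (⟨_, h⟩ | ⟨hiC, _⟩)⟩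
    · exact h
    · exact absurd (hCs hiC) hi
  · intro h
    exact ⟨Finset.mem_powerset.1 (h0 h), Or.inl ⟨fun hc => hi (Finset.mem_powerset.1 (h0 h) hc), h⟩⟩

theorem sec1_glue {s' : Finset α} {i : α} (hi : i ∉ s') {C0 C1 : Finset (Finset α)}
    (h0 : C0 ⊆ s'.powerset) (h1 : C1 ⊆ s'.powerset) :
    sec1 i s' (glue i C0 C1) = C1 := by
  ext C
  rw [mem_sec1, mem_glue h0 h1 hi]
  constructor
  · rintro ⟨hCs, (⟨hiC, _⟩ | ⟨_, h⟩)⟩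
    · exact absurd (Finset.mem_insert_self i C) hiC
    · rwa [Finset.erase_insert (fun hc => hi (hCs hc))] at h
  · intro h
    have hiC : i ∉ C := fun hc => hi (Finset.mem_powerset.1 (h1 h) hc)
    refine ⟨Finset.mem_powerset.1 (h1 h), Or.inr ⟨Finset.mem_insert_self i C, ?_⟩⟩
    rw [Finset.erase_insert hiC]
    exact h

theorem nbr_sec0 {s : Finset α} {i : α} (hi : i ∈ s) {𝒜 : Finset (Finset α)}
    (h𝒜 : 𝒜 ⊆ s.powerset) :
    sec0 (s.erase i) (nbr s 𝒜) = nbr (s.erase i) (sec0 (s.erase i) 𝒜) ∪ sec1 i (s.erase i) 𝒜 := by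
  ext w
  rw [mem_sec0, Finset.mem_union, mem_nbr, mem_sec1, mem_nbr]
  constructor
  · rintro ⟨hws, hw, A, hA, hd⟩
    have hiw : i ∉ w := fun hc => (Finset.notMem_erase i s) (hws hc)
    by_cases hiA : i ∈ A
    · have := hdist_erase_left hiA hiw
      have hzero : hdist (A.erase i) w = 0 := by omega
      have hAw : A.erase i = w := hdist_eq_zero_iff.1 hzero
      refine Or.inr ⟨hws, ?_⟩
      rw [← hAw, Finset.insert_erase hiA]
      exact hA
    · refine Or.inl ⟨Finset.mem_powerset.2 hws, A, mem_sec0.2 ⟨?_, hA⟩, hd⟩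
      rw [Finset.subset_erase]
      exact ⟨Finset.mem_powerset.1 (h𝒜 hA), hiA⟩
  · rintro (⟨hws, A, hA, hd⟩ | ⟨hws, hA⟩)
    · rcases mem_sec0.1 hA with ⟨hAs, hA𝒜⟩
      refine ⟨Finset.mem_powerset.1 hws, Finset.mem_powerset.2
        ((Finset.mem_powerset.1 hws).trans (Finset.erase_subset _ _)), A, hA𝒜, hd⟩
    · have hiw : i ∉ w := fun hc => (Finset.notMem_erase i s) (hws hc)
      refine ⟨hws, Finset.mem_powerset.2 (hws.trans (Finset.erase_subset _ _)),
        insert i w, hA, ?_⟩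
      exact le_of_eq (hdist_insert_self hiw)

theorem nbr_sec1 {s : Finset α} {i : α} (hi : i ∈ s) {𝒜 : Finset (Finset α)}
    (h𝒜 : 𝒜 ⊆ s.powerset) :
    sec1 i (s.erase i) (nbr s 𝒜) =
      nbr (s.erase i) (sec1 i (s.erase i) 𝒜) ∪ sec0 (s.erase i) 𝒜 := by
  ext w
  rw [mem_sec1, Finset.mem_union, mem_nbr, mem_sec0, mem_nbr]
  constructor
  · rintro ⟨hws, hw, A, hA, hd⟩
    have hiw : i ∉ w := fun hc => (Finset.notMem_erase i s) (hws hc)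
    by_cases hiA : i ∈ A
    · refine Or.inl ⟨Finset.mem_powerset.2 hws, A.erase i, mem_sec1.2 ⟨?_, ?_⟩, ?_⟩
      · rw [Finset.subset_erase]
        exact ⟨(Finset.erase_subset _ _).trans (Finset.mem_powerset.1 (h𝒜 hA)),
          Finset.notMem_erase i A⟩
      · rw [Finset.insert_erase hiA]; exact hA
      · have heq : hdist (A.erase i) w = hdist A (insert i w) := by
          have h1 : hdist (A.erase i) ((insert i w).erase i) = hdist A (insert i w) :=
            hdist_erase_erase hiA (Finset.mem_insert_self i w)
          rwa [Finset.erase_insert hiw] at h1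
        omega
    · have h1 : hdist (insert i w) A = hdist ((insert i w).erase i) A + 1 :=
        hdist_erase_left (Finset.mem_insert_self i w) hiA
      rw [Finset.erase_insert hiw] at h1
      rw [hdist_comm] at hd
      have hzero : hdist w A = 0 := by omega
      have : w = A := hdist_eq_zero_iff.1 hzero
      subst this
      exact Or.inr ⟨hws, hA⟩
  · have hiw' : insert i w ⊆ s → True := fun _ => trivial
    rintro (⟨hws, C, hC, hd⟩ | ⟨hws, hA⟩)
    · rcases mem_sec1.1 hC with ⟨hCs, hC𝒜⟩
      have hiw : i ∉ w := fun hc => (Finset.notMem_erase i s) (Finset.mem_powerset.1 hws hc)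
      have hiC : i ∉ C := fun hc => (Finset.notMem_erase i s) (hCs hc)
      refine ⟨Finset.mem_powerset.1 hws, Finset.mem_powerset.2 (Finset.insert_subset hi
        ((Finset.mem_powerset.1 hws).trans (Finset.erase_subset _ _))), insert i C, hC𝒜, ?_⟩
      rw [hdist_insert_insert hiC hiw]
      exact hd
    · have hiw : i ∉ w := fun hc => (Finset.notMem_erase i s) (hws hc)
      refine ⟨hws, Finset.mem_powerset.2 (Finset.insert_subset hi
        (hws.trans (Finset.erase_subset _ _))), w, hA, ?_⟩
      rw [hdist_comm]
      exact le_of_eq (hdist_insert_self hiw)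

theorem card_nbr_split {s : Finset α} {i : α} (hi : i ∈ s) {𝒜 : Finset (Finset α)}
    (h𝒜 : 𝒜 ⊆ s.powerset) :
    (nbr s 𝒜).card =
      (nbr (s.erase i) (sec0 (s.erase i) 𝒜) ∪ sec1 i (s.erase i) 𝒜).card +
      (nbr (s.erase i) (sec1 i (s.erase i) 𝒜) ∪ sec0 (s.erase i) 𝒜).card := by
  rw [← nbr_sec0 hi h𝒜, ← nbr_sec1 hi h𝒜, card_sec_split hi (nbr_subset_powerset s 𝒜)]

-- order compatibility of insert

theorem lexlt_insert {i : α} {A B : Finset α} (hA : i ∉ A) (hB : i ∉ B) (h : lexlt A B) :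
    lexlt (insert i A) (insert i B) := by
  obtain ⟨m, hmA, hmB, hag⟩ := h
  have hmi : m ≠ i := fun hc => hA (hc ▸ hmA)
  refine ⟨m, Finset.mem_insert_of_mem hmA, ?_, ?_⟩
  · intro hc
    rcases Finset.mem_insert.1 hc with hc | hc
    · exact hmi hc
    · exact hmB hc
  · intro t ht
    simp only [Finset.mem_insert]
    by_cases hti : t = i
    · subst hti; tauto
    · rw [hag t ht]

theorem slt_insert {i : α} {A B : Finset α} (hA : i ∉ A) (hB : i ∉ B) (h : slt A B) :
    slt (insert i A) (insert i B) := by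
  rcases h with h | ⟨hc, hl⟩
  · refine Or.inl ?_
    rw [Finset.card_insert_of_notMem hA, Finset.card_insert_of_notMem hB]
    omega
  · refine Or.inr ⟨?_, lexlt_insert hA hB hl⟩
    rw [Finset.card_insert_of_notMem hA, Finset.card_insert_of_notMem hB, hc]

theorem slt_erase {i : α} {A B : Finset α} (hA : i ∈ A) (hB : i ∈ B) (h : slt A B) :
    slt (A.erase i) (B.erase i) := by
  rcases h with h | ⟨hc, hl⟩
  · refine Or.inl ?_
    rw [Finset.card_erase_of_mem hA, Finset.card_erase_of_mem hB]
    have h1 : 0 < A.card := Finset.card_pos.2 ⟨i, hA⟩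
    have h2 : 0 < B.card := Finset.card_pos.2 ⟨i, hB⟩
    omega
  · refine Or.inr ⟨by rw [Finset.card_erase_of_mem hA, Finset.card_erase_of_mem hB, hc], ?_⟩
    obtain ⟨m, hmA, hmB, hag⟩ := hl
    have hmi : m ≠ i := fun hc => hmB (hc ▸ hB)
    refine ⟨m, Finset.mem_erase.2 ⟨hmi, hmA⟩, fun hc => hmB (Finset.mem_of_mem_erase hc), ?_⟩
    intro t ht
    simp only [Finset.mem_erase]
    rw [hag t ht]


-- ## potential function and compression

noncomputable def pot (s : Finset α) (𝒜 : Finset (Finset α)) : ℕ := ∑ A ∈ 𝒜, rank s A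

theorem sec0_eq_filter {s : Finset α} {i : α} {𝒜 : Finset (Finset α)}
    (h𝒜 : 𝒜 ⊆ s.powerset) :
    sec0 (s.erase i) 𝒜 = 𝒜.filter (fun A => i ∉ A) := by
  ext C
  rw [mem_sec0, Finset.mem_filter, Finset.subset_erase]
  constructor
  · rintro ⟨⟨_, hiC⟩, hC⟩; exact ⟨hC, hiC⟩
  · rintro ⟨hC, hiC⟩; exact ⟨⟨Finset.mem_powerset.1 (h𝒜 hC), hiC⟩, hC⟩

theorem sec1_eq_image {s : Finset α} {i : α} {𝒜 : Finset (Finset α)}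
    (h𝒜 : 𝒜 ⊆ s.powerset) :
    sec1 i (s.erase i) 𝒜 = (𝒜.filter (fun A => i ∈ A)).image (fun A => A.erase i) := by
  ext C
  rw [mem_sec1, Finset.mem_image]
  constructor
  · rintro ⟨hCs, hC⟩
    refine ⟨insert i C, Finset.mem_filter.2 ⟨hC, Finset.mem_insert_self i C⟩, ?_⟩
    exact Finset.erase_insert (fun hc => (Finset.subset_erase.1 hCs).2 hc)
  · rintro ⟨A, hA, rfl⟩
    rcases Finset.mem_filter.1 hA with ⟨hA𝒜, hiA⟩
    constructor
    · rw [Finset.subset_erase]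
      exact ⟨(Finset.erase_subset _ _).trans (Finset.mem_powerset.1 (h𝒜 hA𝒜)),
        Finset.notMem_erase i A⟩
    · rw [Finset.insert_erase hiA]; exact hA𝒜

theorem pot_split {s : Finset α} {i : α} (hi : i ∈ s) {𝒜 : Finset (Finset α)}
    (h𝒜 : 𝒜 ⊆ s.powerset) :
    pot s 𝒜 = (∑ C ∈ sec0 (s.erase i) 𝒜, rank s C) +
      (∑ C ∈ sec1 i (s.erase i) 𝒜, rank s (insert i C)) := by
  classical
  rw [pot, ← Finset.sum_filter_add_sum_filter_not 𝒜 (fun A => i ∉ A), sec0_eq_filter h𝒜,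
    sec1_eq_image h𝒜]
  have hff : Finset.filter (fun x => ¬ i ∉ x) 𝒜 = Finset.filter (fun A => i ∈ A) 𝒜 := by
    apply Finset.filter_congr
    intro A _
    simp
  have hinj : ∀ A ∈ 𝒜.filter (fun A => i ∈ A), ∀ B ∈ 𝒜.filter (fun A => i ∈ A),
      A.erase i = B.erase i → A = B := by
    intro A hA B hB hAB
    have hiA : i ∈ A := (Finset.mem_filter.1 hA).2
    have hiB : i ∈ B := (Finset.mem_filter.1 hB).2
    rw [← Finset.insert_erase hiA, ← Finset.insert_erase hiB, hAB]
  have h2 : ∑ C ∈ (𝒜.filter (fun A => i ∈ A)).image (fun A => A.erase i),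
      rank s (insert i C) = ∑ A ∈ 𝒜.filter (fun A => i ∈ A), rank s (insert i (A.erase i)) :=
    Finset.sum_image hinj
  have h3 : ∑ A ∈ 𝒜.filter (fun A => i ∈ A), rank s (insert i (A.erase i)) =
      ∑ A ∈ 𝒜.filter (fun A => i ∈ A), rank s A := by
    refine Finset.sum_congr rfl ?_
    intro A hA
    rw [Finset.insert_erase (Finset.mem_filter.1 hA).2]
  rw [hff, h2, h3]

theorem card_union_of_DC {s' : Finset α} {X Y : Finset (Finset α)}
    (hX : DC s' X) (hY : DC s' Y) : (X ∪ Y).card = max X.card Y.card := by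
  rcases DC_comparable hX hY with h | h
  · rw [Finset.union_eq_right.2 h, max_eq_right (Finset.card_le_card h)]
  · rw [Finset.union_eq_left.2 h, max_eq_left (Finset.card_le_card h)]

theorem compress_step {s : Finset α} {i : α} (hi : i ∈ s) {𝒜 : Finset (Finset α)}
    (h𝒜 : 𝒜 ⊆ s.powerset)
    (ihs : ∀ ℬ ⊆ (s.erase i).powerset, ∃ 𝒞, DC (s.erase i) 𝒞 ∧ 𝒞.card = ℬ.card ∧
      (nbr (s.erase i) 𝒞).card ≤ (nbr (s.erase i) ℬ).card) :
    ∃ B : Finset (Finset α), B ⊆ s.powerset ∧ B.card = 𝒜.card ∧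
      (nbr s B).card ≤ (nbr s 𝒜).card ∧
      (¬ (DC (s.erase i) (sec0 (s.erase i) 𝒜) ∧ DC (s.erase i) (sec1 i (s.erase i) 𝒜)) →
        pot s B < pot s 𝒜) := by
  classical
  have hi' : i ∉ s.erase i := Finset.notMem_erase i s
  have hS0p : sec0 (s.erase i) 𝒜 ⊆ (s.erase i).powerset := sec0_subset _ 𝒜
  have hS1p : sec1 i (s.erase i) 𝒜 ⊆ (s.erase i).powerset := sec1_subset i _ 𝒜
  have ha0 : (sec0 (s.erase i) 𝒜).card ≤ 2 ^ (s.erase i).card := by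
    calc (sec0 (s.erase i) 𝒜).card ≤ (s.erase i).powerset.card := Finset.card_le_card hS0p
      _ = 2 ^ (s.erase i).card := Finset.card_powerset _
  have ha1 : (sec1 i (s.erase i) 𝒜).card ≤ 2 ^ (s.erase i).card := by
    calc (sec1 i (s.erase i) 𝒜).card ≤ (s.erase i).powerset.card := Finset.card_le_card hS1p
      _ = 2 ^ (s.erase i).card := Finset.card_powerset _
  have hT0p : seg (s.erase i) (sec0 (s.erase i) 𝒜).card ⊆ (s.erase i).powerset :=
    seg_subset_powerset _ _
  have hT1p : seg (s.erase i) (sec1 i (s.erase i) 𝒜).card ⊆ (s.erase i).powerset :=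
    seg_subset_powerset _ _
  have hT0c : (seg (s.erase i) (sec0 (s.erase i) 𝒜).card).card = (sec0 (s.erase i) 𝒜).card :=
    card_seg ha0
  have hT1c : (seg (s.erase i) (sec1 i (s.erase i) 𝒜).card).card = (sec1 i (s.erase i) 𝒜).card :=
    card_seg ha1
  have hBsub : glue i (seg (s.erase i) (sec0 (s.erase i) 𝒜).card)
      (seg (s.erase i) (sec1 i (s.erase i) 𝒜).card) ⊆ s.powerset := glue_subset hi hT0p hT1p
  refine ⟨_, hBsub, ?_, ?_, ?_⟩
  · rw [card_glue hi' hT0p hT1p, hT0c, hT1c, card_sec_split hi h𝒜]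
  · -- neighbourhood cards
    rw [card_nbr_split hi h𝒜, card_nbr_split hi hBsub,
      sec0_glue hi' hT0p hT1p, sec1_glue hi' hT0p hT1p]
    obtain ⟨C0, hC0dc, hC0c, hC0n⟩ := ihs _ hS0p
    obtain ⟨C1, hC1dc, hC1c, hC1n⟩ := ihs _ hS1p
    have hT0eq : seg (s.erase i) (sec0 (s.erase i) 𝒜).card = C0 := by
      rw [← hC0c, seg_card_eq hC0dc]
    have hT1eq : seg (s.erase i) (sec1 i (s.erase i) 𝒜).card = C1 := by
      rw [← hC1c, seg_card_eq hC1dc]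
    have hn0 : (nbr (s.erase i) (seg (s.erase i) (sec0 (s.erase i) 𝒜).card)).card ≤
        (nbr (s.erase i) (sec0 (s.erase i) 𝒜)).card := by rw [hT0eq]; exact hC0n
    have hn1 : (nbr (s.erase i) (seg (s.erase i) (sec1 i (s.erase i) 𝒜).card)).card ≤
        (nbr (s.erase i) (sec1 i (s.erase i) 𝒜)).card := by rw [hT1eq]; exact hC1n
    have comp1 : (nbr (s.erase i) (seg (s.erase i) (sec0 (s.erase i) 𝒜).card) ∪
        seg (s.erase i) (sec1 i (s.erase i) 𝒜).card).card ≤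
        (nbr (s.erase i) (sec0 (s.erase i) 𝒜) ∪ sec1 i (s.erase i) 𝒜).card := by
      rw [card_union_of_DC (DC_nbr (DC_seg _ _)) (DC_seg _ _)]
      refine max_le ?_ ?_
      · exact le_trans hn0 (Finset.card_le_card Finset.subset_union_left)
      · rw [hT1c]
        exact Finset.card_le_card Finset.subset_union_right
    have comp2 : (nbr (s.erase i) (seg (s.erase i) (sec1 i (s.erase i) 𝒜).card) ∪
        seg (s.erase i) (sec0 (s.erase i) 𝒜).card).card ≤
        (nbr (s.erase i) (sec1 i (s.erase i) 𝒜) ∪ sec0 (s.erase i) 𝒜).card := by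
      rw [card_union_of_DC (DC_nbr (DC_seg _ _)) (DC_seg _ _)]
      refine max_le ?_ ?_
      · exact le_trans hn1 (Finset.card_le_card Finset.subset_union_left)
      · rw [hT0c]
        exact Finset.card_le_card Finset.subset_union_right
    exact Nat.add_le_add comp1 comp2
  · -- potential decreases strictly
    intro hnc
    rw [pot_split hi h𝒜, pot_split hi hBsub,
      sec0_glue hi' hT0p hT1p, sec1_glue hi' hT0p hT1p]
    have hf0 : ∀ z w, z ∈ (s.erase i).powerset → w ∈ (s.erase i).powerset → slt z w →
        rank s z < rank s w := by
      intro z w hz hw hzw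
      have hz' : z ∈ s.powerset := Finset.mem_powerset.2
        ((Finset.mem_powerset.1 hz).trans (Finset.erase_subset _ _))
      have hw' : w ∈ s.powerset := Finset.mem_powerset.2
        ((Finset.mem_powerset.1 hw).trans (Finset.erase_subset _ _))
      exact rank_strict_mono hz' hw' hzw
    have hf1 : ∀ z w, z ∈ (s.erase i).powerset → w ∈ (s.erase i).powerset → slt z w →
        rank s (insert i z) < rank s (insert i w) := by
      intro z w hz hw hzw
      have hiz : i ∉ z := fun hc => hi' (Finset.mem_powerset.1 hz hc)
      have hiw : i ∉ w := fun hc => hi' (Finset.mem_powerset.1 hw hc)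
      have hz' : insert i z ∈ s.powerset := Finset.mem_powerset.2
        (Finset.insert_subset hi ((Finset.mem_powerset.1 hz).trans (Finset.erase_subset _ _)))
      have hw' : insert i w ∈ s.powerset := Finset.mem_powerset.2
        (Finset.insert_subset hi ((Finset.mem_powerset.1 hw).trans (Finset.erase_subset _ _)))
      exact rank_strict_mono hz' hw' (slt_insert hiz hiw hzw)
    have hsum0 := sum_seg_le (s := s.erase i) hf0 (sec0 (s.erase i) 𝒜).card _ hS0p rfl
    have hsum1 := sum_seg_le (s := s.erase i) (f := fun C => rank s (insert i C)) hf1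
      (sec1 i (s.erase i) 𝒜).card _ hS1p rfl
    have hone : sec0 (s.erase i) 𝒜 ≠ seg (s.erase i) (sec0 (s.erase i) 𝒜).card ∨
        sec1 i (s.erase i) 𝒜 ≠ seg (s.erase i) (sec1 i (s.erase i) 𝒜).card := by
      by_contra hc
      push_neg at hc
      refine hnc ⟨?_, ?_⟩
      · rw [hc.1]; exact DC_seg _ _
      · rw [hc.2]; exact DC_seg _ _
    rcases hone with hne | hne
    · exact Nat.add_lt_add_of_lt_of_le (hsum0.2 hne) hsum1.1
    · exact Nat.add_lt_add_of_le_of_lt hsum0.1 (hsum1.2 hne)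


-- ## exceptional case (compressed in every direction but not downclosed)

theorem exceptional {s : Finset α} {𝒜 : Finset (Finset α)} (h𝒜 : 𝒜 ⊆ s.powerset)
    (hcanon : ∀ i ∈ s, DC (s.erase i) (sec0 (s.erase i) 𝒜) ∧
      DC (s.erase i) (sec1 i (s.erase i) 𝒜))
    (hndc : ¬ DC s 𝒜) :
    ∃ 𝒞, DC s 𝒞 ∧ 𝒞.card = 𝒜.card ∧ (nbr s 𝒞).card ≤ (nbr s 𝒜).card := by
  classical
  have hsne : s.Nonempty := by
    rw [Finset.nonempty_iff_ne_empty]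
    rintro rfl
    refine hndc ⟨h𝒜, ?_⟩
    intro z w hz hw hzw
    have hz' : z = ∅ := by simpa using Finset.mem_powerset.1 hz
    have hw' : w = ∅ := by simpa using Finset.mem_powerset.1 (h𝒜 hw)
    rw [hz', ← hw']
    exact hw
  have hbad : ∃ x y, x ∈ s.powerset ∧ y ∈ 𝒜 ∧ x ∉ 𝒜 ∧ slt x y := by
    have h2 : ¬ ∀ z w, z ∈ s.powerset → w ∈ 𝒜 → sle z w → z ∈ 𝒜 := fun hc => hndc ⟨h𝒜, hc⟩
    push_neg at h2
    obtain ⟨z, w, hz, hw, hzw, hzA⟩ := h2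
    exact ⟨z, w, hz, hw, hzA, slt_of_sle_of_ne hzw (fun hc => hzA (hc ▸ hw))⟩
  obtain ⟨x, y, hxp, hy𝒜, hx𝒜, hxy⟩ := hbad
  have hxs : x ⊆ s := Finset.mem_powerset.1 hxp
  have hys : y ⊆ s := Finset.mem_powerset.1 (h𝒜 hy𝒜)
  -- every bad pair is complementary
  have key : ∀ z w, z ∈ s.powerset → w ∈ 𝒜 → z ∉ 𝒜 → slt z w → w = s \ z := by
    intro z w hzp hw hz hzw
    have hzs : z ⊆ s := Finset.mem_powerset.1 hzp
    have hws : w ⊆ s := Finset.mem_powerset.1 (h𝒜 hw)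
    have hall : ∀ i ∈ s, ¬ (i ∈ z ↔ i ∈ w) := by
      intro i hi hiff
      obtain ⟨hdc0, hdc1⟩ := hcanon i hi
      by_cases hiz : i ∈ z
      · have hiw : i ∈ w := hiff.1 hiz
        have h1 : w.erase i ∈ sec1 i (s.erase i) 𝒜 := mem_sec1.2 ⟨by
          rw [Finset.subset_erase]
          exact ⟨(Finset.erase_subset _ _).trans hws, Finset.notMem_erase _ _⟩,
          by rw [Finset.insert_erase hiw]; exact hw⟩
        have h2 : z.erase i ∈ (s.erase i).powerset := Finset.mem_powerset.2 (by
          rw [Finset.subset_erase]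
          exact ⟨(Finset.erase_subset _ _).trans hzs, Finset.notMem_erase _ _⟩)
        have h3 : z.erase i ∈ sec1 i (s.erase i) 𝒜 :=
          hdc1.2 _ _ h2 h1 (sle_of_slt (slt_erase hiz hiw hzw))
        have h4 := (mem_sec1.1 h3).2
        rw [Finset.insert_erase hiz] at h4
        exact hz h4
      · have hiw : i ∉ w := fun hc => hiz (hiff.2 hc)
        have h1 : w ∈ sec0 (s.erase i) 𝒜 :=
          mem_sec0.2 ⟨Finset.subset_erase.2 ⟨hws, hiw⟩, hw⟩
        have h2 : z ∈ (s.erase i).powerset :=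
          Finset.mem_powerset.2 (Finset.subset_erase.2 ⟨hzs, hiz⟩)
        exact hz ((mem_sec0.1 (hdc0.2 _ _ h2 h1 (sle_of_slt hzw))).2)
    ext t
    simp only [Finset.mem_sdiff]
    constructor
    · intro ht
      exact ⟨hws ht, fun htz => hall t (hws ht) ⟨fun _ => ht, fun _ => htz⟩⟩
    · rintro ⟨hts, htz⟩
      by_contra htw
      exact hall t hts ⟨fun h => absurd h htz, fun h => absurd h htw⟩
  have hy_eq : y = s \ x := key x y hxp hy𝒜 hx𝒜 hxy
  have hdisj : ∀ t, t ∈ x → t ∉ y := by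
    intro t htx hty
    rw [hy_eq] at hty
    exact (Finset.mem_sdiff.1 hty).2 htx
  have hcards : x.card + y.card = s.card := by
    rw [hy_eq, Finset.card_sdiff_of_subset hxs]
    have := Finset.card_le_card hxs
    omega
  -- membership characterisation
  have hchar : ∀ z, z ∈ s.powerset → (z ∈ 𝒜 ↔ (sle z y ∧ z ≠ x)) := by
    intro z hzp
    constructor
    · intro hz𝒜
      refine ⟨?_, fun hc => hx𝒜 (hc ▸ hz𝒜)⟩
      by_contra hc
      have hyz : slt y z := by
        rcases sle_total z y with h | h
        · exact absurd h hc
        · exact slt_of_sle_of_ne h (fun he => hc (he ▸ sle_refl z))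
      have h5 := key x z hxp hz𝒜 hx𝒜 (slt_trans hxy hyz)
      rw [← hy_eq] at h5
      exact slt_irrefl y (h5 ▸ hyz)
    · rintro ⟨hzy, hzx⟩
      by_contra hz𝒜
      rcases hzy with hzy | rfl
      · have h5 := key z y hzp hy𝒜 hz𝒜 hzy
        have h6 : z = x := by
          have h1 : s \ z = s \ x := by rw [← h5, ← hy_eq]
          calc z = s \ (s \ z) := (Finset.sdiff_sdiff_eq_self (Finset.mem_powerset.1 hzp)).symm
            _ = s \ (s \ x) := by rw [h1]
            _ = x := Finset.sdiff_sdiff_eq_self hxs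
        exact hzx h6
      · exact hz𝒜 hy𝒜
  -- adjacency
  have hadj : ∀ z, z ∈ s.powerset → ¬ (slt x z ∧ slt z y) := by
    rintro z hzp ⟨h1, h2⟩
    have hz𝒜 : z ∈ 𝒜 := (hchar z hzp).2 ⟨sle_of_slt h2, (slt_ne h1).symm⟩
    have h5 := key x z hxp hz𝒜 hx𝒜 h1
    rw [← hy_eq] at h5
    exact slt_irrefl z (h5 ▸ h2)
  -- 𝒜 as an explicit family
  have hAeq : 𝒜 = (iseg s y).erase x := by
    ext z
    rw [Finset.mem_erase, mem_iseg]
    constructor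
    · intro hz
      have hzp := h𝒜 hz
      have h5 := (hchar z hzp).1 hz
      exact ⟨h5.2, hzp, h5.1⟩
    · rintro ⟨hzx, hzp, hzy⟩
      exact (hchar z hzp).2 ⟨hzy, hzx⟩
  have hx_iseg_y : x ∈ iseg s y := mem_iseg.2 ⟨hxp, sle_of_slt hxy⟩
  have hy_iseg : iseg s y = insert y (iseg s x) := by
    ext z
    rw [mem_iseg, Finset.mem_insert, mem_iseg]
    constructor
    · rintro ⟨hzp, hzy⟩
      rcases hzy with hzy | rfl
      · rcases slt_or_sle x z with h | h
        · exact absurd ⟨h, hzy⟩ (hadj z hzp)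
        · exact Or.inr ⟨hzp, h⟩
      · exact Or.inl rfl
    · rintro (rfl | ⟨hzp, hzx⟩)
      · exact ⟨Finset.mem_powerset.2 hys, sle_refl _⟩
      · exact ⟨hzp, sle_trans hzx (sle_of_slt hxy)⟩
  have hy_not_in : y ∉ iseg s x := by
    intro hc
    exact slt_ne hxy (sle_antisymm (sle_of_slt hxy) (mem_iseg.1 hc).2)
  have hcard𝒜 : (iseg s x).card = 𝒜.card := by
    rw [hAeq, Finset.card_erase_of_mem hx_iseg_y, hy_iseg,
      Finset.card_insert_of_notMem hy_not_in]
    omega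
  refine ⟨iseg s x, DC_iseg s x, hcard𝒜, ?_⟩
  -- x is nonempty whenever s has at least 2 elements
  have hxne2 : 2 ≤ s.card → x.Nonempty := by
    intro hsc
    rw [Finset.nonempty_iff_ne_empty]
    rintro rfl
    have hy_s : y = s := by rw [hy_eq]; simp
    have hmins : s.min' hsne ∈ s := Finset.min'_mem s hsne
    have hz1 : slt (∅ : Finset α) {s.min' hsne} := Or.inl (by simp)
    have hz2 : slt {s.min' hsne} y := Or.inl (by
      rw [hy_s, Finset.card_singleton]
      omega)
    exact hadj {s.min' hsne} (Finset.mem_powerset.2 (Finset.singleton_subset_iff.2 hmins))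
      ⟨hz1, hz2⟩
  by_cases hM : s.max' hsne ∈ x
  · -- main case: the neighbourhood of iseg s x is inside that of 𝒜
    refine Finset.card_le_card ?_
    intro w hw
    rcases mem_nbr.1 hw with ⟨hwp, u, hu, hdu⟩
    rcases mem_iseg.1 hu with ⟨hup, hux⟩
    rcases hux with hux | heq
    · have hu𝒜 : u ∈ 𝒜 := (hchar u hup).2 ⟨sle_of_slt (slt_trans hux hxy), slt_ne hux⟩
      exact mem_nbr.2 ⟨hwp, u, hu𝒜, hdu⟩
    · rw [heq] at hdu
      -- u = x
      have hxne : x.Nonempty := ⟨s.max' hsne, hM⟩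
      have hxcpos : 0 < x.card := Finset.card_pos.2 hxne
      rcases hdist_le_one_iff.1 hdu with heq | ⟨j, hjw, hx_eq⟩ | ⟨j, hjw, hx_eq⟩
      · -- w = x : use x.erase M
        have h1 : slt (x.erase (s.max' hsne)) x := Or.inl (by
          rw [Finset.card_erase_of_mem hM]; omega)
        have h2 : x.erase (s.max' hsne) ∈ s.powerset :=
          Finset.mem_powerset.2 ((Finset.erase_subset _ _).trans hxs)
        have h3 : x.erase (s.max' hsne) ∈ 𝒜 :=
          (hchar _ h2).2 ⟨sle_of_slt (slt_trans h1 hxy), slt_ne h1⟩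
        refine mem_nbr.2 ⟨hwp, x.erase (s.max' hsne), h3, ?_⟩
        rw [← heq]
        exact le_of_eq (hdist_erase_self hM)
      · -- x = w.erase j : w = insert j x, use w.erase M
        have hjx : j ∉ x := hx_eq ▸ Finset.notMem_erase j w
        have hw_eq : w = insert j x := by rw [hx_eq, Finset.insert_erase hjw]
        have hjs : j ∈ s := Finset.mem_powerset.1 hwp hjw
        have hjM : j ≠ s.max' hsne := fun hc => hjx (hc ▸ hM)
        have hjltM : j < s.max' hsne := lt_of_le_of_ne (Finset.le_max' s j hjs) hjM
        have hMw : s.max' hsne ∈ w := hw_eq ▸ Finset.mem_insert_of_mem hM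
        have hu'_eq : w.erase (s.max' hsne) = insert j (x.erase (s.max' hsne)) := by
          rw [hw_eq, Finset.erase_insert_of_ne hjM]
        have hcardu' : (w.erase (s.max' hsne)).card = x.card := by
          rw [Finset.card_erase_of_mem hMw, hw_eq, Finset.card_insert_of_notMem hjx]
          omega
        have hlex : lexlt (w.erase (s.max' hsne)) x := by
          refine ⟨j, ?_, hjx, ?_⟩
          · rw [hu'_eq]
            exact Finset.mem_insert_self j _
          · intro t ht
            rw [hu'_eq]
            simp only [Finset.mem_insert, Finset.mem_erase]
            have htj : t ≠ j := ne_of_lt ht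
            have htM : t ≠ s.max' hsne := ne_of_lt (ht.trans hjltM)
            constructor
            · rintro (rfl | ⟨_, h⟩)
              · exact absurd rfl htj
              · exact h
            · intro h
              exact Or.inr ⟨htM, h⟩
        have hslt : slt (w.erase (s.max' hsne)) x := Or.inr ⟨hcardu', hlex⟩
        have hu'p : w.erase (s.max' hsne) ∈ s.powerset :=
          Finset.mem_powerset.2 ((Finset.erase_subset _ _).trans (Finset.mem_powerset.1 hwp))
        have hu'𝒜 : w.erase (s.max' hsne) ∈ 𝒜 :=
          (hchar _ hu'p).2 ⟨sle_of_slt (slt_trans hslt hxy), slt_ne hslt⟩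
        exact mem_nbr.2 ⟨hwp, w.erase (s.max' hsne), hu'𝒜, le_of_eq (hdist_erase_self hMw)⟩
      · -- x = insert j w : w = x.erase j
        have hjx : j ∈ x := hx_eq ▸ Finset.mem_insert_self j w
        have hw_eq : w = x.erase j := by rw [hx_eq, Finset.erase_insert hjw]
        have h1 : slt w x := Or.inl (by
          rw [hw_eq, Finset.card_erase_of_mem hjx]; omega)
        have hw𝒜 : w ∈ 𝒜 := (hchar w hwp).2 ⟨sle_of_slt (slt_trans h1 hxy), slt_ne h1⟩
        exact mem_nbr.2 ⟨hwp, w, hw𝒜, by simp⟩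
  · -- small case: s.card ≤ 2, and then nbr s 𝒜 is everything
    have hn2 : s.card ≤ 2 := by
      by_contra hc
      push_neg at hc
      have hxne : x.Nonempty := hxne2 (by omega)
      have hxcpos : 0 < x.card := Finset.card_pos.2 hxne
      have hyx1 : y.card ≤ x.card + 1 := by
        by_contra hcc
        push_neg at hcc
        obtain ⟨z, hzs, hzc⟩ := Finset.exists_subset_card_eq (s := s) (n := x.card + 1) (by omega)
        exact hadj z (Finset.mem_powerset.2 hzs) ⟨Or.inl (by omega), Or.inl (by omega)⟩
      have hxy_le : x.card ≤ y.card := card_le_of_sle (sle_of_slt hxy)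
      have hmx : x.max' hxne ∈ x := Finset.max'_mem x hxne
      have hms : x.max' hxne ∈ s := hxs hmx
      have hMs : s.max' hsne ∈ s := Finset.max'_mem s hsne
      have hmM : x.max' hxne < s.max' hsne :=
        lt_of_le_of_ne (Finset.le_max' s _ hms) (fun hc => hM (hc ▸ hmx))
      have hMex : s.max' hsne ∉ x.erase (x.max' hxne) :=
        fun hc => hM (Finset.mem_of_mem_erase hc)
      have hzsub : insert (s.max' hsne) (x.erase (x.max' hxne)) ⊆ s :=
        Finset.insert_subset hMs ((Finset.erase_subset _ _).trans hxs)
      have hzcard : (insert (s.max' hsne) (x.erase (x.max' hxne))).card = x.card := by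
        rw [Finset.card_insert_of_notMem hMex, Finset.card_erase_of_mem hmx]
        omega
      have hxz : slt x (insert (s.max' hsne) (x.erase (x.max' hxne))) := by
        refine Or.inr ⟨hzcard.symm, x.max' hxne, hmx, ?_, ?_⟩
        · intro hcmem
          rcases Finset.mem_insert.1 hcmem with hcc | hcc
          · exact absurd hcc (ne_of_lt hmM)
          · exact Finset.notMem_erase _ _ hcc
        · intro t ht
          simp only [Finset.mem_insert, Finset.mem_erase]
          have htM : t ≠ s.max' hsne := ne_of_lt (ht.trans hmM)
          have htm : t ≠ x.max' hxne := ne_of_lt ht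
          constructor
          · intro h
            exact Or.inr ⟨htm, h⟩
          · rintro (hcc | ⟨_, h⟩)
            · exact absurd hcc htM
            · exact h
      have hzy : slt (insert (s.max' hsne) (x.erase (x.max' hxne))) y := by
        rcases lt_or_eq_of_le hxy_le with hlt | heqc
        · exact Or.inl (by omega)
        · -- equal layer sizes
          have hxc2 : 2 ≤ x.card := by omega
          have hlex_xy : lexlt x y := by
            rcases hxy with h | ⟨_, h⟩
            · omega
            · exact h
          obtain ⟨m₀, hm₀x, hm₀y, hag⟩ := hlex_xy
          have hsxy : ∀ t, t ∈ s → t ∈ x ∨ t ∈ y := by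
            intro t ht
            by_cases h : t ∈ x
            · exact Or.inl h
            · refine Or.inr ?_
              rw [hy_eq]
              exact Finset.mem_sdiff.2 ⟨ht, h⟩
          have hm₀min : ∀ t ∈ s, ¬ t < m₀ := by
            intro t hts htlt
            rcases hsxy t hts with h | h
            · exact hdisj t h ((hag t htlt).1 h)
            · exact hdisj t ((hag t htlt).2 h) h
          have hμeq : s.min' hsne = m₀ := by
            refine le_antisymm (Finset.min'_le s _ (hxs hm₀x)) ?_
            exact le_of_not_gt (hm₀min _ (Finset.min'_mem s hsne))
          have hμx : s.min' hsne ∈ x := hμeq ▸ hm₀x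
          have hμm : s.min' hsne < x.max' hxne := by
            have h1 : s.min' hsne ≤ x.min' hxne :=
              Finset.min'_le s _ (hxs (Finset.min'_mem x hxne))
            have h2 : x.min' hxne < x.max' hxne :=
              Finset.min'_lt_max'_of_card x (by omega)
            exact lt_of_le_of_lt h1 h2
          refine Or.inr ⟨by omega, s.min' hsne, ?_, ?_, ?_⟩
          · exact Finset.mem_insert_of_mem (Finset.mem_erase.2 ⟨ne_of_lt hμm, hμx⟩)
          · exact hdisj _ hμx
          · intro t ht
            constructor
            · intro hcc
              exact absurd ht (not_lt.2 (Finset.min'_le s t (hzsub hcc)))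
            · intro hcc
              exact absurd ht (not_lt.2 (Finset.min'_le s t (hys hcc)))
      exact hadj _ (Finset.mem_powerset.2 hzsub) ⟨hxz, hzy⟩
    -- small dimensions: neighbourhood of 𝒜 is the whole cube
    have hscpos : 0 < s.card := Finset.card_pos.2 hsne
    have hnbrA : nbr s 𝒜 = s.powerset := by
      refine Finset.Subset.antisymm (nbr_subset_powerset s 𝒜) ?_
      intro w hwp
      rcases (by omega : s.card = 1 ∨ s.card = 2) with h1 | h2
      · refine mem_nbr.2 ⟨hwp, y, hy𝒜, ?_⟩
        calc hdist y w ≤ s.card := hdist_le_card hys (Finset.mem_powerset.1 hwp)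
          _ = 1 := h1
      · have hxne : x.Nonempty := hxne2 (by omega)
        have hxcpos : 0 < x.card := Finset.card_pos.2 hxne
        have hxy_le : x.card ≤ y.card := card_le_of_sle (sle_of_slt hxy)
        have hxc1 : x.card = 1 := by omega
        have hEA : (∅ : Finset α) ∈ 𝒜 := by
          refine (hchar ∅ (Finset.empty_mem_powerset s)).2 ⟨empty_sle y, ?_⟩
          intro hc
          rw [← hc] at hxcpos
          simp at hxcpos
        by_cases hwc : w.card ≤ 1
        · refine mem_nbr.2 ⟨hwp, ∅, hEA, ?_⟩
          rw [hdist_empty_left]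
          exact hwc
        · have hws2 : w ⊆ s := Finset.mem_powerset.1 hwp
          have hws' : s = w := by
            refine (Finset.eq_of_subset_of_card_le hws2 ?_).symm
            have := Finset.card_le_card hws2
            omega
          refine mem_nbr.2 ⟨hwp, y, hy𝒜, ?_⟩
          have h1 : y \ w = ∅ := by
            rw [← hws']
            exact Finset.sdiff_eq_empty_iff_subset.2 hys
          have h2 : w \ y = x := by
            rw [← hws', hy_eq, Finset.sdiff_sdiff_eq_self hxs]
          show ((y \ w) ∪ (w \ y)).card ≤ 1
          rw [h1, Finset.empty_union, h2, hxc1]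
    rw [hnbrA]
    exact Finset.card_le_card (nbr_subset_powerset s _)

-- ## Harper's theorem, existential form

theorem harper_ex : ∀ (n : ℕ) (s : Finset α), s.card = n → ∀ 𝒜 ⊆ s.powerset,
    ∃ 𝒞, DC s 𝒞 ∧ 𝒞.card = 𝒜.card ∧ (nbr s 𝒞).card ≤ (nbr s 𝒜).card := by
  intro n
  induction n using Nat.strong_induction_on with
  | _ n ihn =>
    intro s hs
    suffices h : ∀ (k : ℕ) (𝒜 : Finset (Finset α)), 𝒜 ⊆ s.powerset → pot s 𝒜 = k →
        ∃ 𝒞, DC s 𝒞 ∧ 𝒞.card = 𝒜.card ∧ (nbr s 𝒞).card ≤ (nbr s 𝒜).card by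
      intro 𝒜 h𝒜
      exact h (pot s 𝒜) 𝒜 h𝒜 rfl
    intro k
    induction k using Nat.strong_induction_on with
    | _ k ihk =>
      intro 𝒜 h𝒜 hpot
      by_cases hdc : DC s 𝒜
      · exact ⟨𝒜, hdc, rfl, le_refl _⟩
      by_cases hcanon : ∀ i ∈ s, DC (s.erase i) (sec0 (s.erase i) 𝒜) ∧
          DC (s.erase i) (sec1 i (s.erase i) 𝒜)
      · exact exceptional h𝒜 hcanon hdc
      · push_neg at hcanon
        obtain ⟨i, hi, hnc⟩ := hcanon
        have hcard_lt : (s.erase i).card < n := by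
          rw [Finset.card_erase_of_mem hi]
          have : 0 < s.card := Finset.card_pos.2 ⟨i, hi⟩
          omega
        have ihs : ∀ ℬ ⊆ (s.erase i).powerset, ∃ 𝒞, DC (s.erase i) 𝒞 ∧ 𝒞.card = ℬ.card ∧
            (nbr (s.erase i) 𝒞).card ≤ (nbr (s.erase i) ℬ).card :=
          fun ℬ hB => ihn (s.erase i).card hcard_lt (s.erase i) rfl ℬ hB
        obtain ⟨B, hB1, hB2, hB3, hB4⟩ := compress_step hi h𝒜 ihs
        have hlt : pot s B < k := hpot ▸ hB4 (fun hc => (hnc hc.1) hc.2)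
        obtain ⟨𝒞, h1, h2, h3⟩ := ihk (pot s B) hlt B hB1 rfl
        exact ⟨𝒞, h1, h2.trans hB2, h3.trans hB3⟩


-- ## iterated neighbourhoods

noncomputable def nit (s : Finset α) : ℕ → Finset (Finset α) → Finset (Finset α)
  | 0, 𝒜 => 𝒜
  | t + 1, 𝒜 => nbr s (nit s t 𝒜)

theorem nit_subset_powerset {s : Finset α} {𝒜 : Finset (Finset α)} (h : 𝒜 ⊆ s.powerset) :
    ∀ t, nit s t 𝒜 ⊆ s.powerset
  | 0 => h
  | t + 1 => nbr_subset_powerset s _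

theorem nit_mono {s : Finset α} {𝒜 ℬ : Finset (Finset α)} (h : 𝒜 ⊆ ℬ) :
    ∀ t, nit s t 𝒜 ⊆ nit s t ℬ
  | 0 => h
  | t + 1 => nbr_mono (nit_mono h t)

theorem subset_nit_succ {s : Finset α} {𝒜 : Finset (Finset α)} (h : 𝒜 ⊆ s.powerset) (t : ℕ) :
    nit s t 𝒜 ⊆ nit s (t + 1) 𝒜 :=
  subset_nbr (nit_subset_powerset h t)

theorem DC_nit {s : Finset α} {𝒞 : Finset (Finset α)} (h : DC s 𝒞) :
    ∀ t, DC s (nit s t 𝒞)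
  | 0 => h
  | t + 1 => DC_nbr (DC_nit h t)

theorem mem_nit_of_hdist {s : Finset α} {𝒞 : Finset (Finset α)} (h𝒞 : 𝒞 ⊆ s.powerset) :
    ∀ (t : ℕ) (A B : Finset α), A ∈ s.powerset → B ∈ 𝒞 → hdist A B ≤ t →
      A ∈ nit s t 𝒞 := by
  intro t
  induction t with
  | zero =>
    intro A B hA hB hd
    have : A = B := hdist_eq_zero_iff.1 (le_antisymm hd (Nat.zero_le _))
    rw [this]
    exact hB
  | succ t ih =>
    intro A B hA hB hd
    rcases Nat.lt_or_ge (hdist A B) (t + 1) with h | h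
    · exact subset_nit_succ h𝒞 t (ih A B hA hB (by omega))
    · have hAB : hdist A B = t + 1 := le_antisymm hd h
      obtain ⟨C, hCsub, hCA, hCB⟩ := hdist_step hAB
      have hCs : C ∈ s.powerset := by
        refine Finset.mem_powerset.2 (hCsub.trans (Finset.union_subset ?_ ?_))
        · exact Finset.mem_powerset.1 hA
        · exact Finset.mem_powerset.1 (h𝒞 hB)
      have hC : C ∈ nit s t 𝒞 := ih C B hCs hB (le_of_eq hCB)
      exact mem_nbr.2 ⟨hA, C, hC, by rwa [hdist_comm] at hCA ⊢⟩

theorem hdist_le_of_mem_nit {s : Finset α} {𝒞 : Finset (Finset α)} :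
    ∀ (t : ℕ) (A : Finset α), A ∈ nit s t 𝒞 → ∃ B ∈ 𝒞, hdist A B ≤ t := by
  intro t
  induction t with
  | zero =>
    intro A hA
    exact ⟨A, hA, by simp⟩
  | succ t ih =>
    intro A hA
    rcases mem_nbr.1 hA with ⟨hAs, C, hC, hd⟩
    obtain ⟨B, hB, hdCB⟩ := ih C hC
    refine ⟨B, hB, ?_⟩
    calc hdist A B ≤ hdist A C + hdist C B := hdist_triangle A C B
      _ ≤ 1 + t := by
          rw [hdist_comm] at hd
          omega
      _ = t + 1 := by omega

/-- iterated Harper: segments minimize iterated neighbourhoods. -/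
theorem card_nit_seg_le {s : Finset α} {𝒜 : Finset (Finset α)} (h𝒜 : 𝒜 ⊆ s.powerset) :
    ∀ t, (nit s t (seg s 𝒜.card)).card ≤ (nit s t 𝒜).card := by
  have hm : 𝒜.card ≤ 2 ^ s.card := by
    calc 𝒜.card ≤ s.powerset.card := Finset.card_le_card h𝒜
      _ = 2 ^ s.card := Finset.card_powerset s
  intro t
  induction t with
  | zero =>
    rw [nit, nit, card_seg hm]
  | succ t ih =>
    show (nbr s (nit s t (seg s 𝒜.card))).card ≤ (nbr s (nit s t 𝒜)).card
    obtain ⟨𝒞, h1, h2, h3⟩ := harper_ex s.card s rfl (nit s t 𝒜)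
      (nit_subset_powerset h𝒜 t)
    have hseg𝒞 : seg s (nit s t 𝒜).card = 𝒞 := by
      rw [← h2, seg_card_eq h1]
    have hDCt : DC s (nit s t (seg s 𝒜.card)) := DC_nit (DC_seg s _) t
    have hsub : nit s t (seg s 𝒜.card) ⊆ 𝒞 := by
      rw [← hseg𝒞, ← seg_card_eq hDCt]
      exact seg_mono ih
    calc (nbr s (nit s t (seg s 𝒜.card))).card ≤ (nbr s 𝒞).card :=
          Finset.card_le_card (nbr_mono hsub)
      _ ≤ (nbr s (nit s t 𝒜)).card := h3

-- ## top segments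

noncomputable def topseg (s : Finset α) (m : ℕ) : Finset (Finset α) :=
  s.powerset \ seg s (2 ^ s.card - m)

theorem mem_topseg {s : Finset α} {m : ℕ} {A : Finset α} :
    A ∈ topseg s m ↔ A ∈ s.powerset ∧ A ∉ seg s (2 ^ s.card - m) := Finset.mem_sdiff

theorem card_topseg {s : Finset α} {m : ℕ} (h : m ≤ 2 ^ s.card) : (topseg s m).card = m := by
  rw [topseg, Finset.card_sdiff_of_subset (seg_subset_powerset s _), Finset.card_powerset,
    card_seg (by omega)]
  omega

theorem topseg_upclosed {s : Finset α} {m : ℕ} {A C : Finset α} (hA : A ∈ topseg s m)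
    (hC : C ∈ s.powerset) (hAC : sle A C) : C ∈ topseg s m := by
  rcases mem_topseg.1 hA with ⟨hAp, hAn⟩
  refine mem_topseg.2 ⟨hC, fun hc => hAn ?_⟩
  exact (DC_seg s _).2 A C hAp hc hAC


-- ## segments are Hamming balls

theorem mem_hamBall' [Fintype α] {c A : Finset α} {r : ℕ} :
    A ∈ hamBall c r ↔ hdist c A ≤ r := by
  simp [hamBall]

theorem isHamBall_seg [Fintype α] {b : ℕ} (hb : 1 ≤ b)
    (hbN : b ≤ 2 ^ (Finset.univ : Finset α).card) :
    IsHamBall ∅ (seg (Finset.univ : Finset α) b) := by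
  have hTc : (seg (Finset.univ : Finset α) b).card = b := card_seg hbN
  have hTne : (seg (Finset.univ : Finset α) b).Nonempty := Finset.card_pos.1 (by omega)
  refine ⟨max ((seg (Finset.univ : Finset α) b).sup Finset.card) 1, le_max_right _ _, ?_, ?_⟩
  · intro C hC
    have hCc : C.card ≤ max ((seg (Finset.univ : Finset α) b).sup Finset.card) 1 - 1 := by
      have := mem_hamBall'.1 hC
      rwa [hdist_empty_left] at this
    by_cases hsup : (seg (Finset.univ : Finset α) b).sup Finset.card = 0
    · have hC0 : C = ∅ := by
        have hmz : max 0 1 - 1 = 0 := by decide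
        rw [hsup, hmz] at hCc
        exact Finset.card_eq_zero.1 (Nat.le_zero.1 hCc)
      obtain ⟨B0, hB0⟩ := hTne
      rw [hC0]
      exact (DC_seg _ _).2 ∅ B0 (Finset.mem_powerset.2 (Finset.empty_subset _)) hB0
        (empty_sle B0)
    · obtain ⟨B, hB, hsupeq⟩ := Finset.exists_mem_eq_sup _ hTne Finset.card
      have hBpos : 1 ≤ B.card := by omega
      have hmax : max ((seg (Finset.univ : Finset α) b).sup Finset.card) 1 = B.card := by
        rw [← hsupeq]
        omega
      rw [hmax] at hCc
      refine (DC_seg _ _).2 C B (Finset.mem_powerset.2 (Finset.subset_univ C)) hB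
        (Or.inl (Or.inl (by omega)))
  · intro B hB
    refine mem_hamBall'.2 ?_
    rw [hdist_empty_left]
    calc B.card ≤ (seg (Finset.univ : Finset α) b).sup Finset.card := Finset.le_sup hB
      _ ≤ _ := le_max_left _ _

theorem sle_univ_top [Fintype α] (A : Finset α) : sle A (Finset.univ : Finset α) := by
  by_cases h : A.card < (Finset.univ : Finset α).card
  · exact Or.inl (Or.inl h)
  · push_neg at h
    exact Or.inr (Finset.eq_of_subset_of_card_le (Finset.subset_univ A) h)

theorem isHamBall_topseg [Fintype α] {a : ℕ} (ha : 1 ≤ a)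
    (haN : a ≤ 2 ^ (Finset.univ : Finset α).card) :
    IsHamBall (Finset.univ : Finset α) (topseg (Finset.univ : Finset α) a) := by
  have hRc : (topseg (Finset.univ : Finset α) a).card = a := card_topseg haN
  have hRne : (topseg (Finset.univ : Finset α) a).Nonempty := Finset.card_pos.1 (by omega)
  set f : Finset α → ℕ := fun A => Fintype.card α - A.card with hf
  refine ⟨max ((topseg (Finset.univ : Finset α) a).sup f) 1, le_max_right _ _, ?_, ?_⟩
  · intro C hC
    have hCc : Fintype.card α - C.card ≤ max ((topseg (Finset.univ : Finset α) a).sup f) 1 - 1 := by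
      have := mem_hamBall'.1 hC
      rwa [hdist_univ_left] at this
    have hCn : C.card ≤ Fintype.card α := by
      rw [← Finset.card_univ]
      exact Finset.card_le_card (Finset.subset_univ C)
    by_cases hsup : (topseg (Finset.univ : Finset α) a).sup f = 0
    · have hCuniv : C = Finset.univ := by
        rw [hsup] at hCc
        refine Finset.eq_of_subset_of_card_le (Finset.subset_univ C) ?_
        rw [Finset.card_univ]
        omega
      obtain ⟨A0, hA0⟩ := hRne
      rw [hCuniv]
      exact topseg_upclosed hA0 (Finset.mem_powerset.2 (Finset.Subset.refl _))
        (sle_univ_top A0)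
    · obtain ⟨A, hA, hsupeq⟩ := Finset.exists_mem_eq_sup _ hRne f
      have hAn : A.card ≤ Fintype.card α := by
        rw [← Finset.card_univ]
        exact Finset.card_le_card (Finset.subset_univ A)
      have hfA : 1 ≤ f A := by omega
      have hmax : max ((topseg (Finset.univ : Finset α) a).sup f) 1 = f A := by
        rw [← hsupeq]
        omega
      rw [hmax] at hCc
      have hAC : A.card < C.card := by
        simp only [hf] at hCc hfA
        omega
      exact topseg_upclosed hA (Finset.mem_powerset.2 (Finset.subset_univ C))
        (Or.inl (Or.inl hAC))
  · intro A hA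
    refine mem_hamBall'.2 ?_
    rw [hdist_univ_left]
    calc Fintype.card α - A.card ≤ (topseg (Finset.univ : Finset α) a).sup f :=
          Finset.le_sup (f := f) hA
      _ ≤ _ := le_max_left _ _

-- ## famDist API

theorem famDist_le_hdist {𝒜 ℬ : Finset (Finset α)} {A B : Finset α}
    (hA : A ∈ 𝒜) (hB : B ∈ ℬ) : famDist 𝒜 ℬ ≤ hdist A B :=
  Nat.sInf_le ⟨A, hA, B, hB, rfl⟩

theorem le_famDist {𝒜 ℬ : Finset (Finset α)} (h𝒜 : 𝒜.Nonempty) (hℬ : ℬ.Nonempty) {d : ℕ}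
    (h : ∀ A ∈ 𝒜, ∀ B ∈ ℬ, d ≤ hdist A B) : d ≤ famDist 𝒜 ℬ := by
  obtain ⟨A, hA⟩ := h𝒜
  obtain ⟨B, hB⟩ := hℬ
  refine le_csInf ⟨hdist A B, A, hA, B, hB, rfl⟩ ?_
  rintro n ⟨A', hA', B', hB', rfl⟩
  exact h A' hA' B' hB'


end Harper


/-- Vertex isoperimetric inequality on the hypercube, two-family version: any two nonempty
set systems can be replaced by Hamming balls centered at `X` and `∅` respectively, of the
same sizes, whose distance is at least as large. -/
theorem hamming_compression {α : Type*} [DecidableEq α] [Fintype α]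
    (𝒜 ℬ : Finset (Finset α)) (h𝒜 : 𝒜.Nonempty) (hℬ : ℬ.Nonempty) :
    ∃ 𝒜₀ ℬ₀ : Finset (Finset α),
      IsHamBall Finset.univ 𝒜₀ ∧ IsHamBall ∅ ℬ₀ ∧
        𝒜₀.card = 𝒜.card ∧ ℬ₀.card = ℬ.card ∧ famDist 𝒜 ℬ ≤ famDist 𝒜₀ ℬ₀ := by
  classical
  letI : LinearOrder α := LinearOrder.lift' (Fintype.equivFin α) (Fintype.equivFin α).injective
  have hsubA : 𝒜 ⊆ (Finset.univ : Finset α).powerset :=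
    fun A _ => Finset.mem_powerset.2 (Finset.subset_univ A)
  have hsubB : ℬ ⊆ (Finset.univ : Finset α).powerset :=
    fun B _ => Finset.mem_powerset.2 (Finset.subset_univ B)
  have haN : 𝒜.card ≤ 2 ^ (Finset.univ : Finset α).card := by
    calc 𝒜.card ≤ (Finset.univ : Finset α).powerset.card := Finset.card_le_card hsubA
      _ = 2 ^ (Finset.univ : Finset α).card := Finset.card_powerset _
  have hbN : ℬ.card ≤ 2 ^ (Finset.univ : Finset α).card := by
    calc ℬ.card ≤ (Finset.univ : Finset α).powerset.card := Finset.card_le_card hsubB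
      _ = 2 ^ (Finset.univ : Finset α).card := Finset.card_powerset _
  have ha1 : 1 ≤ 𝒜.card := Finset.card_pos.2 h𝒜
  have hb1 : 1 ≤ ℬ.card := Finset.card_pos.2 hℬ
  have hcardA0 : (Harper.topseg (Finset.univ : Finset α) 𝒜.card).card = 𝒜.card :=
    Harper.card_topseg haN
  have hcardB0 : (Harper.seg (Finset.univ : Finset α) ℬ.card).card = ℬ.card :=
    Harper.card_seg hbN
  refine ⟨Harper.topseg (Finset.univ : Finset α) 𝒜.card, Harper.seg (Finset.univ : Finset α) ℬ.card,
    Harper.isHamBall_topseg ha1 haN, Harper.isHamBall_seg hb1 hbN, hcardA0, hcardB0, ?_⟩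
  rcases Nat.eq_zero_or_pos (famDist 𝒜 ℬ) with h0 | hpos
  · rw [h0]
    exact Nat.zero_le _
  obtain ⟨t, ht⟩ : ∃ t, famDist 𝒜 ℬ = t + 1 := ⟨famDist 𝒜 ℬ - 1, by omega⟩
  have hfar : ∀ A ∈ 𝒜, ∀ B ∈ ℬ, famDist 𝒜 ℬ ≤ hdist A B :=
    fun A hA B hB => Harper.famDist_le_hdist hA hB
  have hdisj : Disjoint (Harper.nit (Finset.univ : Finset α) t ℬ) 𝒜 := by
    rw [Finset.disjoint_left]
    intro A hAn hA𝒜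
    obtain ⟨B, hB, hd⟩ := Harper.hdist_le_of_mem_nit t A hAn
    have := hfar A hA𝒜 B hB
    omega
  have hcard2 : (Harper.nit (Finset.univ : Finset α) t ℬ).card + 𝒜.card ≤
      2 ^ (Finset.univ : Finset α).card := by
    have h1 : (Harper.nit (Finset.univ : Finset α) t ℬ) ∪ 𝒜 ⊆ (Finset.univ : Finset α).powerset :=
      Finset.union_subset (Harper.nit_subset_powerset hsubB t) hsubA
    calc (Harper.nit (Finset.univ : Finset α) t ℬ).card + 𝒜.card
        = ((Harper.nit (Finset.univ : Finset α) t ℬ) ∪ 𝒜).card := (Finset.card_union_of_disjoint hdisj).symm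
      _ ≤ (Finset.univ : Finset α).powerset.card := Finset.card_le_card h1
      _ = 2 ^ (Finset.univ : Finset α).card := Finset.card_powerset _
  have hseg : (Harper.nit (Finset.univ : Finset α) t (Harper.seg (Finset.univ : Finset α) ℬ.card)).card ≤
      (Harper.nit (Finset.univ : Finset α) t ℬ).card := Harper.card_nit_seg_le hsubB t
  have hsub2 : Harper.nit (Finset.univ : Finset α) t (Harper.seg (Finset.univ : Finset α) ℬ.card) ⊆
      Harper.seg (Finset.univ : Finset α) (2 ^ (Finset.univ : Finset α).card - 𝒜.card) := by
    have hd1 : Harper.DC (Finset.univ : Finset α) (Harper.nit (Finset.univ : Finset α) t (Harper.seg (Finset.univ : Finset α) ℬ.card)) :=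
      Harper.DC_nit (Harper.DC_seg _ _) t
    have hcard3 : (Harper.nit (Finset.univ : Finset α) t (Harper.seg (Finset.univ : Finset α) ℬ.card)).card ≤
        (Harper.seg (Finset.univ : Finset α) (2 ^ (Finset.univ : Finset α).card - 𝒜.card)).card := by
      rw [Harper.card_seg (by omega)]
      omega
    rcases Harper.DC_comparable hd1 (Harper.DC_seg _ _) with h | h
    · exact h
    · rw [Finset.eq_of_subset_of_card_le h hcard3]
  have hA0ne : (Harper.topseg (Finset.univ : Finset α) 𝒜.card).Nonempty :=
    Finset.card_pos.1 (by omega)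
  have hB0ne : (Harper.seg (Finset.univ : Finset α) ℬ.card).Nonempty :=
    Finset.card_pos.1 (by omega)
  refine Harper.le_famDist hA0ne hB0ne ?_
  intro A' hA' B' hB'
  by_contra hc
  push_neg at hc
  have hA'mem : A' ∈ Harper.nit (Finset.univ : Finset α) t (Harper.seg (Finset.univ : Finset α) ℬ.card) :=
    Harper.mem_nit_of_hdist (Harper.seg_subset_powerset _ _) t A' B'
      (Harper.mem_topseg.1 hA').1 hB' (by omega)
  exact (Harper.mem_topseg.1 hA').2 (hsub2 hA'mem)
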